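/- arXiv:1808.01498 — 5 statements merged into one kernel-verified Lean document; each statement's English description precedes it below -/
import Mathlib

section
/- Let N, M : A → B be quantum channels, let Λ : C → A⊗E be a quantum channel (pre-processing), and let Ω : B⊗E → D be a quantum channel (post-processing), and define the superchannel Θ acting on channels from A to B by Θ(Ψ) := Ω ∘ (Ψ ⊗ id_E) ∘ Λ, a channel from C to D. Then for any generalized divergence D, the amortized channel divergence obeys data processing under the superchannel: D^A(N‖M) ≥ D^A(Θ(N)‖Θ(M)). -/
open scoped BigOperators ComplexOrder

noncomputable section

attribute [local instance] Classical.propDecidable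

/-- A density matrix (quantum state): positive semidefinite with unit trace. -/
def IsDensity {ι : Type} [Fintype ι] (ρ : Matrix ι ι ℂ) : Prop :=
  ρ.PosSemidef ∧ ρ.trace = 1

/-- The map `id_R ⊗ Φ` (for linear `Φ`), defined blockwise. -/
def idTensor {R ι κ : Type} (Φ : Matrix ι ι ℂ → Matrix κ κ ℂ)
    (X : Matrix (R × ι) (R × ι) ℂ) : Matrix (R × κ) (R × κ) ℂ :=
  fun p q => Φ (fun a b => X (p.1, a) (q.1, b)) p.2 q.2

/-- The map `Φ ⊗ id_E` (for linear `Φ`), defined blockwise. -/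
def tensorId {ι κ E : Type} (Φ : Matrix ι ι ℂ → Matrix κ κ ℂ)
    (X : Matrix (ι × E) (ι × E) ℂ) : Matrix (κ × E) (κ × E) ℂ :=
  fun p q => Φ (fun a b => X (a, p.2) (b, q.2)) p.1 q.1

/-- A quantum channel: linear, trace preserving, and completely positive. -/
structure IsChannel {ι κ : Type} [Fintype ι] [Fintype κ]
    (Φ : Matrix ι ι ℂ → Matrix κ κ ℂ) : Prop where
  linear : IsLinearMap ℂ Φ
  tracePres : ∀ X, (Φ X).trace = X.trace
  compPos : ∀ (k : ℕ) (X : Matrix (Fin k × ι) (Fin k × ι) ℂ),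
      X.PosSemidef → (idTensor Φ X).PosSemidef

/-- A family of divergences, one for every finite dimension. -/
abbrev DivFam : Type 1 :=
  ∀ (ι : Type) [Fintype ι] [DecidableEq ι], Matrix ι ι ℂ → Matrix ι ι ℂ → EReal

/-- Data processing: a generalized divergence does not increase under channels. -/
def DivDataProcessing (D : DivFam) : Prop :=
  ∀ (ι κ : Type) [Fintype ι] [DecidableEq ι] [Fintype κ] [DecidableEq κ]
    (Φ : Matrix ι ι ℂ → Matrix κ κ ℂ), IsChannel Φ →
    ∀ ρ σ : Matrix ι ι ℂ, IsDensity ρ → IsDensity σ →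
      D κ (Φ ρ) (Φ σ) ≤ D ι ρ σ

/-- Faithfulness: `D(ρ‖ρ) ≤ 0` for every state `ρ`. -/
def DivFaithful (D : DivFam) : Prop :=
  ∀ (ι : Type) [Fintype ι] [DecidableEq ι] (ρ : Matrix ι ι ℂ),
    IsDensity ρ → D ι ρ ρ ≤ 0

/-- Strong faithfulness: `D(ρ‖σ) = 0` iff `ρ = σ`. -/
def DivStronglyFaithful (D : DivFam) : Prop :=
  ∀ (ι : Type) [Fintype ι] [DecidableEq ι] (ρ σ : Matrix ι ι ℂ),
    IsDensity ρ → IsDensity σ → (D ι ρ σ = 0 ↔ ρ = σ)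

/-- The generalized channel divergence `D(N‖M)`. -/
def channelDiv (D : DivFam) {ι κ : Type} [Fintype ι] [DecidableEq ι] [Fintype κ] [DecidableEq κ]
    (N M : Matrix ι ι ℂ → Matrix κ κ ℂ) : EReal :=
  ⨆ (R : ℕ) (ρ : Matrix (Fin R × ι) (Fin R × ι) ℂ) (_ : IsDensity ρ),
    D (Fin R × κ) (idTensor N ρ) (idTensor M ρ)

/-- The amortized channel divergence `D^𝒜(N‖M)`. -/
def amortizedDiv (D : DivFam) {ι κ : Type} [Fintype ι] [DecidableEq ι] [Fintype κ] [DecidableEq κ]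
    (N M : Matrix ι ι ℂ → Matrix κ κ ℂ) : EReal :=
  ⨆ (R : ℕ) (ρ : Matrix (Fin R × ι) (Fin R × ι) ℂ) (σ : Matrix (Fin R × ι) (Fin R × ι) ℂ)
    (_ : IsDensity ρ) (_ : IsDensity σ),
      D (Fin R × κ) (idTensor N ρ) (idTensor M σ) - D (Fin R × ι) ρ σ

/-- Apply a real function to a Hermitian matrix via the spectral decomposition. -/
def hermFun {ι : Type} [Fintype ι] [DecidableEq ι] (f : ℝ → ℝ) (A : Matrix ι ι ℂ) :
    Matrix ι ι ℂ :=
  if hA : A.IsHermitian then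
    (hA.eigenvectorUnitary : Matrix ι ι ℂ) *
      Matrix.diagonal (fun i => (f (hA.eigenvalues i) : ℂ)) *
      star (hA.eigenvectorUnitary : Matrix ι ι ℂ)
  else 0

/-- Real matrix power via spectral calculus, with the generalized-inverse convention `0 ↦ 0`. -/
def matPow {ι : Type} [Fintype ι] [DecidableEq ι] (A : Matrix ι ι ℂ) (r : ℝ) : Matrix ι ι ℂ :=
  hermFun (fun x => if x = 0 then 0 else Real.rpow x r) A

/-- Matrix base-2 logarithm via spectral calculus, taken on the support. -/
def matLog2 {ι : Type} [Fintype ι] [DecidableEq ι] (A : Matrix ι ι ℂ) : Matrix ι ι ℂ :=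
  hermFun (fun x => if x = 0 then 0 else Real.logb 2 x) A

/-- The projection onto the support of a Hermitian matrix. -/
def suppProj {ι : Type} [Fintype ι] [DecidableEq ι] (A : Matrix ι ι ℂ) : Matrix ι ι ℂ :=
  hermFun (fun x => if x = 0 then 0 else 1) A

/-- `supp ρ ⊆ supp σ`, expressed (for Hermitian matrices) as kernel containment
`ker σ ⊆ ker ρ`. -/
def suppLE {ι : Type} [Fintype ι] (ρ σ : Matrix ι ι ℂ) : Prop :=
  ∀ v : ι → ℂ, σ.mulVec v = 0 → ρ.mulVec v = 0

/-- The quantum relative entropy `D(ρ‖σ) = Tr[ρ(log₂ρ − log₂σ)]`,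
`+∞` if the support condition fails. -/
def relEnt {ι : Type} [Fintype ι] [DecidableEq ι] (ρ σ : Matrix ι ι ℂ) : EReal :=
  if suppLE ρ σ then (((ρ * (matLog2 ρ - matLog2 σ)).trace).re : EReal) else ⊤

/-- `−log₂ x` as an extended real, with `−log₂ 0 = +∞`. -/
def negLog2 (x : ℝ) : EReal :=
  if x ≤ 0 then ⊤ else ((-Real.logb 2 x : ℝ) : EReal)

/-- The max-relative entropy `D_max(ρ‖σ) = inf{λ : ρ ≤ 2^λ σ}` (Loewner order). -/
def Dmax {ι : Type} [Fintype ι] (ρ σ : Matrix ι ι ℂ) : EReal :=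
  ⨅ (l : ℝ) (_ : (((2 : ℝ) ^ l) • σ - ρ).PosSemidef), (l : EReal)

/-- The sandwiched Rényi divergence `D̃_α`. -/
def sandRenyi {ι : Type} [Fintype ι] [DecidableEq ι] (α : ℝ) (ρ σ : Matrix ι ι ℂ) : EReal :=
  if α = 1 then relEnt ρ σ
  else if 1 < α ∧ ¬ suppLE ρ σ then ⊤
  else if α < 1 ∧ (ρ * σ).trace = 0 then ⊤
  else ((((α - 1)⁻¹ *
      Real.logb 2
        (((matPow (matPow σ ((1 - α) / (2 * α)) * ρ * matPow σ ((1 - α) / (2 * α))) α).trace).re)) :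
        ℝ) : EReal)

/-- The Petz–Rényi divergence `D_α`. -/
def petzRenyi {ι : Type} [Fintype ι] [DecidableEq ι] (α : ℝ) (ρ σ : Matrix ι ι ℂ) : EReal :=
  if α = 0 then negLog2 (((suppProj ρ * σ).trace).re)
  else if α = 1 then relEnt ρ σ
  else if 1 < α ∧ ¬ suppLE ρ σ then ⊤
  else if α < 1 ∧ (ρ * σ).trace = 0 then ⊤
  else ((((α - 1)⁻¹ * Real.logb 2 (((matPow ρ α * matPow σ (1 - α)).trace).re)) : ℝ) : EReal)

/-- The trace norm `‖X‖₁ = Tr √(XᴴX)`. -/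
def traceNorm {ι : Type} [Fintype ι] [DecidableEq ι] (X : Matrix ι ι ℂ) : ℝ :=
  ((matPow (X.conjTranspose * X) (1/2 : ℝ)).trace).re

/-- The fidelity `F(ρ,σ) = ‖√ρ√σ‖₁²`. -/
def matFidelity {ι : Type} [Fintype ι] [DecidableEq ι] (ρ σ : Matrix ι ι ℂ) : ℝ :=
  (traceNorm (matPow ρ (1/2 : ℝ) * matPow σ (1/2 : ℝ))) ^ 2

def relEntFam : DivFam := fun _ _ _ ρ σ => relEnt ρ σ
def DmaxFam : DivFam := fun _ _ _ ρ σ => Dmax ρ σ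
def sandFam (α : ℝ) : DivFam := fun _ _ _ ρ σ => sandRenyi α ρ σ
def petzFam (α : ℝ) : DivFam := fun _ _ _ ρ σ => petzRenyi α ρ σ
/-- `D̃_{1/2}(ρ‖σ) = −log₂ F(ρ,σ)` as a divergence family. -/
def fidDivFam : DivFam := fun _ _ _ ρ σ => negLog2 (matFidelity ρ σ)

/-- The classical-quantum state `Σ_x p(x) |x⟩⟨x| ⊗ ρ^x`. -/
def cqState {X ι : Type} [DecidableEq X] (p : X → ℝ) (ρ : X → Matrix ι ι ℂ) :
    Matrix (X × ι) (X × ι) ℂ :=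
  fun a b => if a.1 = b.1 then (p a.1 : ℂ) * ρ a.1 a.2 b.2 else 0

/-- The direct-sum property of a generalized divergence on classical-quantum states. -/
def DivDirectSum (D : DivFam) : Prop :=
  ∀ (X ι : Type) [Fintype X] [DecidableEq X] [Fintype ι] [DecidableEq ι]
    (p : X → ℝ), (∀ x, 0 ≤ p x) → (∑ x, p x = 1) →
    ∀ (ρ σ : X → Matrix ι ι ℂ), (∀ x, IsDensity (ρ x)) → (∀ x, IsDensity (σ x)) →
      D (X × ι) (cqState p ρ) (cqState p σ) = ∑ x, (p x : EReal) * D ι (ρ x) (σ x)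

/-- The Kronecker (tensor) product of square matrices. -/
def mkron {ι E : Type} (A : Matrix ι ι ℂ) (B : Matrix E E ℂ) : Matrix (ι × E) (ι × E) ℂ :=
  fun p q => A p.1 q.1 * B p.2 q.2

/-- Sub-additivity of a divergence with respect to tensor-product states. -/
def DivSubAdditive (D : DivFam) : Prop :=
  ∀ (ι E : Type) [Fintype ι] [DecidableEq ι] [Fintype E] [DecidableEq E]
    (ρ σ : Matrix ι ι ℂ) (ω τ : Matrix E E ℂ),
    IsDensity ρ → IsDensity σ → IsDensity ω → IsDensity τ →
      D (ι × E) (mkron ρ ω) (mkron σ τ) ≤ D ι ρ σ + D E ω τ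

/-- The classical-quantum channel `ρ ↦ Σ_x ⟨x|ρ|x⟩ ν^x`. -/
def cqChannel {X κ : Type} [Fintype X] [Fintype κ] (ν : X → Matrix κ κ ℂ) :
    Matrix X X ℂ → Matrix κ κ ℂ :=
  fun ρ => ∑ x, ρ x x • ν x

/-- The maximally entangled state of Schmidt rank `|ι|` on `ι × ι`. -/
def maxEnt (ι : Type) [Fintype ι] [DecidableEq ι] : Matrix (ι × ι) (ι × ι) ℂ :=
  fun p q => if p.1 = p.2 ∧ q.1 = q.2 then ((Fintype.card ι : ℂ))⁻¹ else 0

/-- An `(m+1)`-round adaptive channel discrimination protocol: registers `R_0, …, R_m`,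
a shared initial state, adaptive channels between channel uses, and a final measurement. -/
structure Protocol (ι κ : Type) [Fintype ι] [DecidableEq ι] [Fintype κ] [DecidableEq κ]
    (m : ℕ) where
  r : ℕ → ℕ
  init : Matrix (Fin (r 0) × ι) (Fin (r 0) × ι) ℂ
  init_density : IsDensity init
  adapt : ∀ i : ℕ, Matrix (Fin (r i) × κ) (Fin (r i) × κ) ℂ →
      Matrix (Fin (r (i + 1)) × ι) (Fin (r (i + 1)) × ι) ℂ
  adapt_channel : ∀ i, i < m → IsChannel (adapt i)
  meas : Matrix (Fin (r m) × κ) (Fin (r m) × κ) ℂ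
  meas_psd : meas.PosSemidef
  meas_le_one : ((1 : Matrix (Fin (r m) × κ) (Fin (r m) × κ) ℂ) - meas).PosSemidef

namespace Protocol

variable {ι κ : Type} [Fintype ι] [DecidableEq ι] [Fintype κ] [DecidableEq κ] {m : ℕ}

/-- The state on `R_i ⊗ A` just before the `(i+1)`-st channel use, when the channel is `Ch`. -/
def evolve (P : Protocol ι κ m) (Ch : Matrix ι ι ℂ → Matrix κ κ ℂ) :
    (i : ℕ) → Matrix (Fin (P.r i) × ι) (Fin (P.r i) × ι) ℂ
  | 0 => P.init
  | (i + 1) => P.adapt i (idTensor Ch (P.evolve Ch i))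

/-- The final state on `R_m ⊗ B` after all `m + 1` channel uses. -/
def final (P : Protocol ι κ m) (Ch : Matrix ι ι ℂ → Matrix κ κ ℂ) :
    Matrix (Fin (P.r m) × κ) (Fin (P.r m) × κ) ℂ :=
  idTensor Ch (P.evolve Ch m)

/-- The probability of accepting (deciding for the null hypothesis). -/
def acceptProb (P : Protocol ι κ m) (Ch : Matrix ι ι ℂ → Matrix κ κ ℂ) : ℝ :=
  ((P.meas * P.final Ch).trace).re

/-- The type I error probability `Tr[(I − Q) ρ'⁽ⁿ⁾]`. -/
def typeI (P : Protocol ι κ m) (N : Matrix ι ι ℂ → Matrix κ κ ℂ) : ℝ :=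
  ((((1 : Matrix (Fin (P.r m) × κ) (Fin (P.r m) × κ) ℂ) - P.meas) * P.final N).trace).re

/-- The type II error probability `Tr[Q τ'⁽ⁿ⁾]`. -/
def typeII (P : Protocol ι κ m) (M : Matrix ι ι ℂ → Matrix κ κ ℂ) : ℝ :=
  ((P.meas * P.final M).trace).re

end Protocol

/-- The binary (classical) state `diag(p, 1−p)`. -/
def binState (p : ℝ) : Matrix (Fin 2) (Fin 2) ℂ :=
  Matrix.diagonal (fun i => if i = 0 then (p : ℂ) else ((1 - p : ℝ) : ℂ))

/-- The binary entropy `h₂(ε)`. -/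
def h2 (ε : ℝ) : ℝ := -(ε * Real.logb 2 ε) - (1 - ε) * Real.logb 2 (1 - ε)

/-- `ζ_n(ε, N, M)` with `n = m + 1`: the optimal type II error exponent among all
`(m+1)`-round adaptive protocols with type I error at most `ε`. -/
def steinExp {ι κ : Type} [Fintype ι] [DecidableEq ι] [Fintype κ] [DecidableEq κ]
    (N M : Matrix ι ι ℂ → Matrix κ κ ℂ) (m : ℕ) (ε : ℝ) : EReal :=
  ⨆ (P : Protocol ι κ m) (_ : P.typeI N ≤ ε),
    (((m + 1 : ℝ))⁻¹ : EReal) * negLog2 (P.typeII M)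

/-- Partial trace over the (left) reference system. -/
def ptraceLeft {R ι : Type} [Fintype R] (ψ : Matrix (R × ι) (R × ι) ℂ) : Matrix ι ι ℂ :=
  fun a b => ∑ r, ψ (r, a) (r, b)

/-- The energy-constrained generalized channel divergence. -/
def eChannelDiv (D : DivFam) {ι κ : Type} [Fintype ι] [DecidableEq ι] [Fintype κ] [DecidableEq κ]
    (H : Matrix ι ι ℂ) (E : ℝ) (N M : Matrix ι ι ℂ → Matrix κ κ ℂ) : EReal :=
  ⨆ (R : ℕ) (ψ : Matrix (Fin R × ι) (Fin R × ι) ℂ) (_ : IsDensity ψ)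
    (_ : ((H * ptraceLeft ψ).trace).re ≤ E),
      D (Fin R × κ) (idTensor N ψ) (idTensor M ψ)

/-- The energy-constrained amortized channel divergence. -/
def eAmortizedDiv (D : DivFam) {ι κ : Type} [Fintype ι] [DecidableEq ι] [Fintype κ] [DecidableEq κ]
    (H : Matrix ι ι ℂ) (E : ℝ) (N M : Matrix ι ι ℂ → Matrix κ κ ℂ) : EReal :=
  ⨆ (R : ℕ) (ρ : Matrix (Fin R × ι) (Fin R × ι) ℂ) (σ : Matrix (Fin R × ι) (Fin R × ι) ℂ)
    (_ : IsDensity ρ) (_ : IsDensity σ)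
    (_ : ((H * ptraceLeft ρ).trace).re ≤ E) (_ : ((H * ptraceLeft σ).trace).re ≤ E),
      D (Fin R × κ) (idTensor N ρ) (idTensor M σ) - D (Fin R × ι) ρ σ

/-- `sup_α(ρ/σ)`: supremum of `Tr[Λρ]/Tr[Λσ]` over Hermitian `Λ` with `α⁻¹ I ≤ Λ ≤ I`. -/
def hilbertSup {ι : Type} [Fintype ι] [DecidableEq ι] (α : ℝ) (ρ σ : Matrix ι ι ℂ) : ℝ :=
  sSup { t : ℝ | ∃ Λ : Matrix ι ι ℂ, Λ.IsHermitian ∧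
    (Λ - (α⁻¹ : ℝ) • (1 : Matrix ι ι ℂ)).PosSemidef ∧
    ((1 : Matrix ι ι ℂ) - Λ).PosSemidef ∧
    t = ((Λ * ρ).trace).re / ((Λ * σ).trace).re }

/-- The Hilbert `α`-divergence `H_α(ρ‖σ)`, with `H₁(ρ‖σ) = ‖ρ−σ‖₁ / (2 ln 2)`. -/
def hilbertDiv {ι : Type} [Fintype ι] [DecidableEq ι] (α : ℝ) (ρ σ : Matrix ι ι ℂ) : ℝ :=
  if α = 1 then (2 * Real.log 2)⁻¹ * traceNorm (ρ - σ)
  else (α / (α - 1)) * Real.logb 2 (hilbertSup α ρ σ)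

section Aux

variable {ι κ μ : Type} [Fintype ι] [DecidableEq ι] [Fintype κ] [DecidableEq κ]
  [Fintype μ] [DecidableEq μ]

lemma idTensor_comp' {R : Type} (Φ : Matrix ι ι ℂ → Matrix κ κ ℂ)
    (Ψ : Matrix κ κ ℂ → Matrix μ μ ℂ) (X : Matrix (R × ι) (R × ι) ℂ) :
    idTensor (fun Y => Ψ (Φ Y)) X = idTensor Ψ (idTensor Φ X) := rfl

lemma isChannel_comp {Φ : Matrix ι ι ℂ → Matrix κ κ ℂ} {Ψ : Matrix κ κ ℂ → Matrix μ μ ℂ}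
    (hΦ : IsChannel Φ) (hΨ : IsChannel Ψ) : IsChannel (fun X => Ψ (Φ X)) where
  linear := ⟨fun x y => by simp [hΦ.linear.map_add, hΨ.linear.map_add],
    fun c x => by simp [hΦ.linear.map_smul, hΨ.linear.map_smul]⟩
  tracePres X := by rw [hΨ.tracePres, hΦ.tracePres]
  compPos k X hX := by
    rw [idTensor_comp']
    exact hΨ.compPos k _ (hΦ.compPos k X hX)

lemma idTensor_submatrix {R : Type} (e : κ ≃ ι) (X : Matrix (R × ι) (R × ι) ℂ) :
    idTensor (fun Y : Matrix ι ι ℂ => Y.submatrix e e) X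
      = X.submatrix (Prod.map id e) (Prod.map id e) := rfl

lemma isChannel_submatrix (e : κ ≃ ι) :
    IsChannel (fun Y : Matrix ι ι ℂ => Y.submatrix e e) where
  linear := ⟨fun _ _ => rfl, fun _ _ => rfl⟩
  tracePres X := by
    simp only [Matrix.trace, Matrix.diag, Matrix.submatrix_apply]
    exact e.sum_comp fun i => X i i
  compPos k X hX := by
    rw [idTensor_submatrix]
    exact hX.submatrix _

lemma trace_idTensor {R : Type} [Fintype R] {Φ : Matrix ι ι ℂ → Matrix κ κ ℂ}
    (h : ∀ X, (Φ X).trace = X.trace) (X : Matrix (R × ι) (R × ι) ℂ) :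
    (idTensor Φ X).trace = X.trace := by
  simp only [Matrix.trace, Matrix.diag, Fintype.sum_prod_type, idTensor]
  exact Finset.sum_congr rfl fun r _ => h (fun a b => X (r, a) (r, b))

lemma isChannel_idTensor {n : ℕ} {Φ : Matrix ι ι ℂ → Matrix κ κ ℂ} (hΦ : IsChannel Φ) :
    IsChannel (idTensor Φ : Matrix (Fin n × ι) (Fin n × ι) ℂ →
      Matrix (Fin n × κ) (Fin n × κ) ℂ) where
  linear := ⟨fun x y => by
      funext p q
      simp only [idTensor]
      rw [show (fun a b => (x + y) (p.1, a) (q.1, b))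
          = Matrix.of (fun a b => x (p.1, a) (q.1, b)) + Matrix.of (fun a b => y (p.1, a) (q.1, b)) from rfl,
        hΦ.linear.map_add]
      rfl,
    fun c x => by
      funext p q
      simp only [idTensor]
      rw [show (fun a b => (c • x) (p.1, a) (q.1, b))
          = c • Matrix.of (fun a b => x (p.1, a) (q.1, b)) from rfl, hΦ.linear.map_smul]
      rfl⟩
  tracePres X := trace_idTensor hΦ.tracePres X
  compPos k X hX := by
    let g : Fin (k * n) ≃ Fin k × Fin n := finProdFinEquiv.symm
    let a : (Fin (k * n) × ι) → (Fin k × (Fin n × ι)) :=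
      fun s => ((g s.1).1, ((g s.1).2, s.2))
    let b : (Fin k × (Fin n × κ)) → (Fin (k * n) × κ) :=
      fun p => (g.symm (p.1, p.2.1), p.2.2)
    have key : idTensor (idTensor Φ) X = (idTensor Φ (X.submatrix a a)).submatrix b b := by
      funext p q
      show Φ _ _ _ = Φ _ _ _
      congr 1
      funext u v
      simp only [a, b, g, Matrix.submatrix_apply, idTensor, Equiv.apply_symm_apply]
    rw [key]
    exact ((hΦ.compPos (k * n) _ (hX.submatrix a)).submatrix b)

lemma IsChannel.density {Φ : Matrix ι ι ℂ → Matrix κ κ ℂ} (hΦ : IsChannel Φ)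
    {ρ : Matrix ι ι ℂ} (hρ : IsDensity ρ) : IsDensity (Φ ρ) := by
  refine ⟨?_, by rw [hΦ.tracePres]; exact hρ.2⟩
  have h1 : (ρ.submatrix (Prod.snd : Fin 1 × ι → ι)
      (Prod.snd : Fin 1 × ι → ι)).PosSemidef := hρ.1.submatrix _
  have h2 := (hΦ.compPos 1 _ h1).submatrix (fun c : κ => ((0 : Fin 1), c))
  have key : Φ ρ = (idTensor Φ (ρ.submatrix Prod.snd Prod.snd)).submatrix
      (fun c : κ => ((0 : Fin 1), c)) (fun c : κ => ((0 : Fin 1), c)) := by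
    funext c c'
    show Φ ρ c c' = Φ _ c c'
    congr 1
  rw [key]
  exact h2

/-- Reassociation equivalence used when folding `E` into the reference system. -/
def swizzle {A B C : Type} (f : A ≃ B × C) (ι : Type) : (A × ι) ≃ (B × (ι × C)) where
  toFun p := ((f p.1).1, (p.2, (f p.1).2))
  invFun q := (f.symm (q.1, q.2.2), q.2.1)
  left_inv p := by cases p; simp
  right_inv q := by cases' q with q1 q2; cases q2; simp

end Aux

/-- The amortized channel divergence obeys data processing under
superchannels `Θ(Ψ) = Ω ∘ (Ψ ⊗ id_E) ∘ Λ`. -/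
theorem amortizedDiv_superchannel_le
    (D : DivFam) (hdp : DivDataProcessing D)
    {ι κ γ δ E : Type} [Fintype ι] [DecidableEq ι] [Fintype κ] [DecidableEq κ]
    [Fintype γ] [DecidableEq γ] [Fintype δ] [DecidableEq δ] [Fintype E] [DecidableEq E]
    (N M : Matrix ι ι ℂ → Matrix κ κ ℂ) (hN : IsChannel N) (hM : IsChannel M)
    (Λ : Matrix γ γ ℂ → Matrix (ι × E) (ι × E) ℂ) (hΛ : IsChannel Λ)
    (Ω : Matrix (κ × E) (κ × E) ℂ → Matrix δ δ ℂ) (hΩ : IsChannel Ω) :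
    amortizedDiv D (fun X => Ω (tensorId N (Λ X))) (fun X => Ω (tensorId M (Λ X))) ≤
      amortizedDiv D N M := by
  refine iSup_le fun R => iSup_le fun ρ => iSup_le fun σ => iSup_le fun hρ =>
    iSup_le fun hσ => ?_
  classical
  set R' := Fintype.card (Fin R × E) with hR'
  let g : Fin R' ≃ (Fin R × E) := (Fintype.equivFin (Fin R × E)).symm
  let eIn : (Fin R' × ι) ≃ (Fin R × (ι × E)) := swizzle g ι
  let eOut : (Fin R' × κ) ≃ (Fin R × (κ × E)) := swizzle g κ
  let Pre : Matrix (Fin R × γ) (Fin R × γ) ℂ → Matrix (Fin R' × ι) (Fin R' × ι) ℂ :=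
    fun X => (idTensor Λ X).submatrix eIn eIn
  let Post : Matrix (Fin R' × κ) (Fin R' × κ) ℂ → Matrix (Fin R × δ) (Fin R × δ) ℂ :=
    fun Y => idTensor Ω (Y.submatrix eOut.symm eOut.symm)
  have hPre : IsChannel Pre :=
    isChannel_comp (Φ := idTensor Λ) (Ψ := fun Y => Y.submatrix eIn eIn)
      (isChannel_idTensor hΛ) (isChannel_submatrix eIn)
  have hPost : IsChannel Post :=
    isChannel_comp (Φ := fun Y => Y.submatrix eOut.symm eOut.symm) (Ψ := idTensor Ω)
      (isChannel_submatrix eOut.symm) (isChannel_idTensor hΩ)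
  have key : ∀ (Ch : Matrix ι ι ℂ → Matrix κ κ ℂ) (X : Matrix (Fin R × γ) (Fin R × γ) ℂ),
      idTensor (fun Z => Ω (tensorId Ch (Λ Z))) X = Post (idTensor Ch (Pre X)) := by
    intro Ch X
    funext p q
    show Ω _ _ _ = Ω _ _ _
    congr 1
    funext u v
    show tensorId Ch (Λ fun a b => X (p.1, a) (q.1, b)) u v = _
    cases' u with b e
    cases' v with b' e'
    show Ch _ _ _ = Ch _ _ _
    congr 1
    funext a a'
    simp [Pre, idTensor, eIn, eOut, swizzle, Matrix.submatrix_apply,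
      Equiv.apply_symm_apply, Equiv.symm_apply_apply]
  have hρ' : IsDensity (Pre ρ) := hPre.density hρ
  have hσ' : IsDensity (Pre σ) := hPre.density hσ
  have hNρ : IsDensity (idTensor N (Pre ρ)) := (isChannel_idTensor hN).density hρ'
  have hMσ : IsDensity (idTensor M (Pre σ)) := (isChannel_idTensor hM).density hσ'
  have step1 : D (Fin R × δ) (idTensor (fun X => Ω (tensorId N (Λ X))) ρ)
        (idTensor (fun X => Ω (tensorId M (Λ X))) σ)
      ≤ D (Fin R' × κ) (idTensor N (Pre ρ)) (idTensor M (Pre σ)) := by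
    rw [key N ρ, key M σ]
    exact hdp _ _ Post hPost _ _ hNρ hMσ
  have step2 : D (Fin R' × ι) (Pre ρ) (Pre σ) ≤ D (Fin R × γ) ρ σ :=
    hdp _ _ Pre hPre ρ σ hρ hσ
  calc D (Fin R × δ) (idTensor (fun X => Ω (tensorId N (Λ X))) ρ)
        (idTensor (fun X => Ω (tensorId M (Λ X))) σ) - D (Fin R × γ) ρ σ
      ≤ D (Fin R' × κ) (idTensor N (Pre ρ)) (idTensor M (Pre σ))
          - D (Fin R' × ι) (Pre ρ) (Pre σ) := EReal.sub_le_sub step1 step2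
    _ ≤ amortizedDiv D N M :=
        le_iSup_of_le R' (le_iSup_of_le (Pre ρ) (le_iSup_of_le (Pre σ)
          (le_iSup_of_le hρ' (le_iSup_of_le hσ' le_rfl))))

end
end

section
/- Let {N^x}_{x∈X} and {M^x}_{x∈X} be finite families of quantum channels from A to B, and let p_X be a probability distribution on the finite set X. If the generalized divergence D obeys the direct-sum property on classical-quantum states, then the amortized channel divergence is jointly convex: Σ_x p_X(x) · D^A(N^x‖M^x) ≥ D^A(N̄‖M̄), where N̄ := Σ_x p_X(x) N^x and M̄ := Σ_x p_X(x) M^x. -/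
open scoped BigOperators ComplexOrder

noncomputable section

attribute [local instance] Classical.propDecidable

section AuxiliaryLemmas

lemma ereal_coe_sum {Y : Type} (s : Finset Y) (f : Y → ℝ) :
    ((∑ x ∈ s, f x : ℝ) : EReal) = ∑ x ∈ s, ((f x : ℝ) : EReal) :=
  map_sum (⟨⟨(fun r => (r : EReal)), EReal.coe_zero⟩, EReal.coe_add⟩ : ℝ →+ EReal) f s

lemma sum_eq_bot_of_mem {Y : Type} {s : Finset Y} {f : Y → EReal} {x : Y}
    (hx : x ∈ s) (h : f x = ⊥) : ∑ y ∈ s, f y = ⊥ := by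
  classical
  rw [← Finset.add_sum_erase _ _ hx, h, EReal.bot_add]

lemma key_ereal {Y : Type} [Fintype Y] (p : Y → ℝ) (hp : ∀ x, 0 ≤ p x) (hp1 : ∑ x, p x = 1)
    (Dx A : Y → EReal) (c T : EReal)
    (hT : T ≤ ∑ x, (p x : EReal) * Dx x)
    (hA : ∀ x, Dx x - c ≤ A x) :
    T - c ≤ ∑ x, (p x : EReal) * A x := by
  obtain ⟨x0, hx0⟩ : ∃ x : Y, 0 < p x := by
    by_contra h
    push_neg at h
    have : ∑ x, p x ≤ 0 := Finset.sum_nonpos fun x _ => h x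
    linarith
  induction c using EReal.rec with
  | top => simp [sub_eq_add_neg]
  | bot =>
    by_cases hTb : T = ⊥
    · simp [hTb, sub_eq_add_neg]
    · have hS : (∑ x, (p x : EReal) * Dx x) ≠ ⊥ := fun h => hTb (le_bot_iff.1 (h ▸ hT))
      have hterm : ∀ x, 0 < p x → (p x : EReal) * A x = ⊤ := by
        intro x hxp
        have hDb : Dx x ≠ ⊥ := by
          intro hb
          exact hS (sum_eq_bot_of_mem (Finset.mem_univ x)
            (by rw [hb]; exact EReal.mul_bot_of_pos (by exact_mod_cast hxp)))
        have : (⊤ : EReal) ≤ A x := by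
          have := hA x
          rwa [sub_eq_add_neg, EReal.neg_bot, EReal.add_top_of_ne_bot hDb] at this
        rw [top_le_iff.1 this]
        exact EReal.mul_top_of_pos (by exact_mod_cast hxp)
      have hnn : ∀ x ∈ Finset.univ, (0:EReal) ≤ (p x : EReal) * A x := by
        intro x _
        rcases eq_or_lt_of_le (hp x) with h0 | hxp
        · simp [← h0]
        · rw [hterm x hxp]; exact le_top
      have : (⊤ : EReal) ≤ ∑ x, (p x : EReal) * A x := by
        rw [← hterm x0 hx0]
        exact Finset.single_le_sum hnn (Finset.mem_univ x0)
      exact le_trans le_top this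
  | coe r =>
    have h1 : ∀ x, (p x : EReal) * Dx x ≤ (p x : EReal) * A x + ((p x * r : ℝ) : EReal) := by
      intro x
      rcases eq_or_lt_of_le (hp x) with h0 | hxp
      · simp [← h0]
      · have hx : Dx x ≤ A x + (r : EReal) := by
          have := add_le_add (hA x) (le_refl (r : EReal))
          rwa [EReal.sub_add_cancel] at this
        have hmul : (p x : EReal) * Dx x ≤ (p x : EReal) * (A x + (r : EReal)) :=
          mul_le_mul_of_nonneg_left hx (by exact_mod_cast hp x)
        refine hmul.trans (le_of_eq ?_)
        induction A x using EReal.rec with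
        | top => rw [EReal.top_add_coe, EReal.mul_top_of_pos (by exact_mod_cast hxp),
            EReal.top_add_coe]
        | bot => rw [EReal.bot_add, EReal.mul_bot_of_pos (by exact_mod_cast hxp),
            EReal.bot_add]
        | coe a => norm_cast; ring
    calc T - (r : EReal) ≤ (∑ x, (p x : EReal) * Dx x) - (r : EReal) :=
          EReal.sub_le_sub hT le_rfl
      _ ≤ (∑ x, ((p x : EReal) * A x + ((p x * r : ℝ) : EReal))) - (r : EReal) :=
          EReal.sub_le_sub (Finset.sum_le_sum fun x _ => h1 x) le_rfl
      _ = ((∑ x, (p x : EReal) * A x) + (r : EReal)) - (r : EReal) := by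
          rw [Finset.sum_add_distrib]
          congr 1
          rw [← ereal_coe_sum]
          rw [← Finset.sum_mul, hp1, one_mul]
      _ = ∑ x, (p x : EReal) * A x := EReal.add_sub_cancel_right

lemma posSemidef_sum {n Y : Type} [Fintype n] [Fintype Y] (f : Y → Matrix n n ℂ)
    (h : ∀ x, (f x).PosSemidef) : (∑ x, f x).PosSemidef :=
  Finset.sum_induction f _ (fun _ _ ha hb => ha.add hb) Matrix.PosSemidef.zero
    (fun x _ => h x)

/-- Embedding matrix used to write `id ⊗ Tr_X` as a sum of conjugations. -/
def embB {J Z : Type} [DecidableEq Z] [DecidableEq J] (k : ℕ) (x : Z) :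
    Matrix (Fin k × J) (Fin k × (Z × J)) ℂ :=
  fun p P => if P = (p.1, (x, p.2)) then 1 else 0

lemma idTensor_ptraceLeft_eq {Z J : Type} [Fintype Z] [DecidableEq Z] [Fintype J]
    [DecidableEq J] (k : ℕ) (Y : Matrix (Fin k × (Z × J)) (Fin k × (Z × J)) ℂ) :
    idTensor (ptraceLeft (R := Z) (ι := J)) Y
      = ∑ x : Z, embB (J := J) k x * Y * (embB (J := J) k x).conjTranspose := by
  ext p q
  rw [Matrix.sum_apply]
  refine Finset.sum_congr rfl fun x _ => ?_
  simp only [Matrix.mul_apply, Matrix.conjTranspose_apply, embB, ite_mul, one_mul, zero_mul,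
    Finset.sum_ite_eq, Finset.mem_univ, if_true, apply_ite (star : ℂ → ℂ), star_one, star_zero,
    mul_ite, mul_one, mul_zero]
  simp [Finset.sum_ite_eq, idTensor, ptraceLeft]

lemma isChannel_ptraceLeft {Z J : Type} [Fintype Z] [DecidableEq Z] [Fintype J]
    [DecidableEq J] : IsChannel (ptraceLeft (R := Z) (ι := J)) := by
  refine ⟨⟨?_, ?_⟩, ?_, ?_⟩
  · intro ψ φ; ext a b; simp [ptraceLeft, Finset.sum_add_distrib]
  · intro c ψ; ext a b; simp [ptraceLeft, Finset.mul_sum, Matrix.smul_apply, smul_eq_mul]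
  · intro ψ
    simp only [Matrix.trace, Matrix.diag, ptraceLeft, Fintype.sum_prod_type]
    exact Finset.sum_comm
  · intro k Y hY
    rw [idTensor_ptraceLeft_eq]
    exact posSemidef_sum _ fun x => hY.mul_mul_conjTranspose_same (embB k x)

lemma trace_idTensor_s3 {A B : Type} [Fintype A] [Fintype B] {R : ℕ}
    (Φ : Matrix A A ℂ → Matrix B B ℂ) (hΦ : ∀ Z, (Φ Z).trace = Z.trace)
    (ρ : Matrix (Fin R × A) (Fin R × A) ℂ) : (idTensor Φ ρ).trace = ρ.trace := by
  simp only [Matrix.trace, Matrix.diag, idTensor, Fintype.sum_prod_type]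
  refine Finset.sum_congr rfl fun r _ => ?_
  exact hΦ (fun a b' => ρ (r, a) (r, b'))

lemma isDensity_idTensor {A B : Type} [Fintype A] [Fintype B] {R : ℕ}
    {Φ : Matrix A A ℂ → Matrix B B ℂ} (hΦ : IsChannel Φ)
    {ρ : Matrix (Fin R × A) (Fin R × A) ℂ} (hρ : IsDensity ρ) :
    IsDensity (idTensor Φ ρ) :=
  ⟨hΦ.compPos R ρ hρ.1, by rw [trace_idTensor_s3 Φ hΦ.tracePres, hρ.2]⟩

/-- Embedding used to write a cq state as a sum of conjugations. -/
def embC {Z A : Type} [DecidableEq Z] [DecidableEq A] (p : Z → ℝ) (x : Z) :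
    Matrix (Z × A) A ℂ :=
  fun P a => if P = (x, a) then (Real.sqrt (p x) : ℂ) else 0

lemma cqState_eq_sum {Z A : Type} [Fintype Z] [DecidableEq Z] [Fintype A] [DecidableEq A]
    (p : Z → ℝ) (hp : ∀ x, 0 ≤ p x) (ρ : Z → Matrix A A ℂ) :
    cqState p ρ = ∑ x, embC (A := A) p x * ρ x * (embC (A := A) p x).conjTranspose := by
  ext P Q
  obtain ⟨y, b⟩ := P
  obtain ⟨y', b'⟩ := Q
  rw [Matrix.sum_apply]
  have hterm : ∀ x : Z, (embC (A := A) p x * ρ x * (embC (A := A) p x).conjTranspose : Matrix (Z × A) (Z × A) ℂ)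
        (y, b) (y', b')
      = if y = x ∧ y' = x then ((p x : ℂ)) * ρ x b b' else 0 := by
    intro x
    have hsq : (Real.sqrt (p x) : ℂ) * (Real.sqrt (p x) : ℂ) = ((p x : ℝ) : ℂ) := by
      rw [← Complex.ofReal_mul, Real.mul_self_sqrt (hp x)]
    by_cases h1 : y = x <;> by_cases h2 : y' = x <;>
      simp only [Matrix.mul_apply, Matrix.conjTranspose_apply, embC, Prod.ext_iff, h1, h2,
        ite_and, if_true, if_false, true_and, false_and, and_true, and_false, ite_mul, mul_ite,
        zero_mul, mul_zero, apply_ite (star : ℂ → ℂ), star_zero, Finset.sum_ite_eq,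
        Finset.sum_ite_eq', Finset.mem_univ, if_true, Finset.sum_const_zero,
        eq_self_iff_true]
    · simp [Complex.star_def, Complex.conj_ofReal, ← hsq]
      ring
  rw [Finset.sum_congr rfl fun x _ => hterm x]
  by_cases h : y = y'
  · subst h
    simp [cqState, and_self, Finset.sum_ite_eq, Finset.sum_ite_eq']
  · rw [Finset.sum_eq_zero, cqState]
    · simp [h]
    · intro x _
      exact if_neg fun hc => h (hc.1.trans hc.2.symm)


lemma isDensity_cqState {Z A : Type} [Fintype Z] [DecidableEq Z] [Fintype A] [DecidableEq A]
    (p : Z → ℝ) (hp : ∀ x, 0 ≤ p x) (hp1 : ∑ x, p x = 1)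
    (ρ : Z → Matrix A A ℂ) (hρ : ∀ x, IsDensity (ρ x)) : IsDensity (cqState p ρ) := by
  constructor
  · rw [cqState_eq_sum p hp ρ]
    exact posSemidef_sum _ fun x => (hρ x).1.mul_mul_conjTranspose_same (embC p x)
  · have : (cqState p ρ).trace = ∑ x : Z, ((p x : ℂ)) * (ρ x).trace := by
      simp only [Matrix.trace, Matrix.diag, cqState, Fintype.sum_prod_type, if_true,
        Finset.mul_sum]
    rw [this]
    have : ∀ x : Z, ((p x : ℂ)) * (ρ x).trace = ((p x : ℝ) : ℂ) := by
      intro x; rw [(hρ x).2, mul_one]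
    rw [Finset.sum_congr rfl fun x _ => this x, ← Complex.ofReal_sum, hp1, Complex.ofReal_one]

lemma ptraceLeft_cqState {Z A : Type} [Fintype Z] [DecidableEq Z] [Fintype A]
    (p : Z → ℝ) (ω : Z → Matrix A A ℂ) :
    ptraceLeft (cqState p ω) = ∑ x, (p x : ℂ) • ω x := by
  ext a b
  rw [Matrix.sum_apply]
  simp [ptraceLeft, cqState, Matrix.smul_apply, smul_eq_mul]

lemma idTensor_avg {Z A B : Type} [Fintype Z] [Fintype A] [Fintype B] {R : ℕ}
    (p : Z → ℝ) (N : Z → Matrix A A ℂ → Matrix B B ℂ)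
    (ρ : Matrix (Fin R × A) (Fin R × A) ℂ) :
    idTensor (fun Y => ∑ x, (p x : ℂ) • N x Y) ρ
      = ∑ x, (p x : ℂ) • idTensor (N x) ρ := by
  ext q q'
  rw [Matrix.sum_apply]
  simp [idTensor, Matrix.sum_apply, Matrix.smul_apply, smul_eq_mul]

end AuxiliaryLemmas

/-- If the generalized divergence has the direct-sum property, then the
amortized channel divergence is jointly convex. -/
theorem amortizedDiv_jointly_convex
    (D : DivFam) (hdp : DivDataProcessing D) (hds : DivDirectSum D)
    {X ι κ : Type} [Fintype X] [DecidableEq X]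
    [Fintype ι] [DecidableEq ι] [Fintype κ] [DecidableEq κ]
    (p : X → ℝ) (hp : ∀ x, 0 ≤ p x) (hp1 : ∑ x, p x = 1)
    (N M : X → Matrix ι ι ℂ → Matrix κ κ ℂ)
    (hN : ∀ x, IsChannel (N x)) (hM : ∀ x, IsChannel (M x)) :
    amortizedDiv D (fun Y => ∑ x, (p x : ℂ) • N x Y) (fun Y => ∑ x, (p x : ℂ) • M x Y) ≤
      ∑ x, (p x : EReal) * amortizedDiv D (N x) (M x) := by
  rw [amortizedDiv]
  refine iSup_le fun R => iSup_le fun ρ => iSup_le fun σ => iSup_le fun hρ =>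
    iSup_le fun hσ => ?_
  have hρN : ∀ x, IsDensity (idTensor (N x) ρ) := fun x => isDensity_idTensor (hN x) hρ
  have hσM : ∀ x, IsDensity (idTensor (M x) σ) := fun x => isDensity_idTensor (hM x) hσ
  have hcqρ : IsDensity (cqState p fun x => idTensor (N x) ρ) :=
    isDensity_cqState p hp hp1 _ hρN
  have hcqσ : IsDensity (cqState p fun x => idTensor (M x) σ) :=
    isDensity_cqState p hp hp1 _ hσM
  have hdpstep := hdp (X × (Fin R × κ)) (Fin R × κ) ptraceLeft isChannel_ptraceLeft
    _ _ hcqρ hcqσ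
  rw [ptraceLeft_cqState, ptraceLeft_cqState, ← idTensor_avg p N ρ, ← idTensor_avg p M σ,
    hds X (Fin R × κ) p hp hp1 _ _ hρN hσM] at hdpstep
  have hA : ∀ x, D (Fin R × κ) (idTensor (N x) ρ) (idTensor (M x) σ) - D (Fin R × ι) ρ σ
      ≤ amortizedDiv D (N x) (M x) := by
    intro x
    exact le_iSup_of_le R (le_iSup_of_le ρ (le_iSup_of_le σ (le_iSup_of_le hρ
      (le_iSup_of_le hσ le_rfl))))
  exact key_ereal p hp hp1 _ _ _ _ hdpstep hA

end
end

section
/- Let N, M : A → B be quantum channels. Then the max-relative entropy channel divergence is achieved by the maximally entangled state: D_max(N‖M) = D_max((id_R⊗N)(Φ_{RA}) ‖ (id_R⊗M)(Φ_{RA})), where Φ_{RA} is the maximally entangled state of Schmidt rank d_A on R⊗A with R a copy of A. -/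
open scoped BigOperators ComplexOrder

noncomputable section

attribute [local instance] Classical.propDecidable

section MyAux

open scoped Matrix

variable {ι κ : Type} [Fintype ι] [DecidableEq ι] [Fintype κ] [DecidableEq κ]

lemma realSmul_matrix {n m : Type} (r : ℝ) (X : Matrix n m ℂ) :
    r • X = ((r : ℂ)) • X := by
  ext p q
  simp [Matrix.smul_apply, Complex.real_smul]

lemma psd_complex_smul {n : Type} [Fintype n] {A : Matrix n n ℂ} (hA : A.PosSemidef)
    {c : ℝ} (hc : 0 ≤ c) : ((c : ℂ) • A).PosSemidef := by
  refine Matrix.PosSemidef.of_dotProduct_mulVec_nonneg ?_ ?_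
  · have := hA.1
    unfold Matrix.IsHermitian at this ⊢
    rw [Matrix.conjTranspose_smul, this]
    congr 1
    simp
  · intro x
    rw [Matrix.smul_mulVec, dotProduct_smul, smul_eq_mul]
    exact mul_nonneg (Complex.zero_le_real.mpr hc) (hA.dotProduct_mulVec_nonneg x)

lemma psd_sum {n α : Type} [Fintype n] (s : Finset α) (f : α → Matrix n n ℂ)
    (h : ∀ a ∈ s, (f a).PosSemidef) : (∑ a ∈ s, f a).PosSemidef := by
  classical
  induction s using Finset.induction with
  | empty => simpa using Matrix.PosSemidef.zero
  | insert _ _ hnot ih =>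
    rw [Finset.sum_insert hnot]
    exact (h _ (Finset.mem_insert_self _ _)).add
      (ih fun a ha => h a (Finset.mem_insert_of_mem ha))

lemma apply_entry (Φ : Matrix ι ι ℂ → Matrix κ κ ℂ) (hΦ : IsLinearMap ℂ Φ)
    (A : Matrix ι ι ℂ) (b b' : κ) :
    Φ A b b' = ∑ i, ∑ j, A i j * Φ (Matrix.single i j 1) b b' := by
  set L := IsLinearMap.mk' Φ hΦ with hL
  have hLA : ∀ X, Φ X = L X := fun _ => rfl
  have hA : A = ∑ i, ∑ j, A i j • Matrix.single i j (1 : ℂ) := by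
    conv_lhs => rw [Matrix.matrix_eq_sum_single A]
    refine Finset.sum_congr rfl fun i _ => Finset.sum_congr rfl fun j _ => ?_
    rw [Matrix.smul_single, smul_eq_mul, mul_one]
  conv_lhs => rw [hLA, hA]
  rw [map_sum, Matrix.sum_apply]
  refine Finset.sum_congr rfl fun i _ => ?_
  rw [map_sum, Matrix.sum_apply]
  refine Finset.sum_congr rfl fun j _ => ?_
  rw [map_smul, Matrix.smul_apply, smul_eq_mul]
  rfl


def outerV {n : Type} (w : n → ℂ) : Matrix n n ℂ :=
  fun p q => w p * star (w q)

def Cw {R : Type} (w : R × ι → ℂ) : Matrix (R × κ) (ι × κ) ℂ :=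
  fun p q => if p.2 = q.2 then w (p.1, q.1) else 0

lemma maxEnt_block (i j : ι) :
    (fun a b => maxEnt ι (i, a) (j, b))
      = ((Fintype.card ι : ℂ))⁻¹ • Matrix.single i j (1 : ℂ) := by
  funext a b
  show maxEnt ι (i, a) (j, b) = (((Fintype.card ι : ℂ))⁻¹ •
    Matrix.single i j (1 : ℂ)) a b
  simp only [maxEnt, Matrix.smul_apply, Matrix.single, Matrix.of_apply, smul_eq_mul]
  split_ifs <;> simp

lemma idTensor_maxEnt_apply (Φ : Matrix ι ι ℂ → Matrix κ κ ℂ) (hΦ : IsLinearMap ℂ Φ)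
    (i j : ι) (b b' : κ) :
    idTensor Φ (maxEnt ι) (i, b) (j, b')
      = ((Fintype.card ι : ℂ))⁻¹ * Φ (Matrix.single i j 1) b b' := by
  show Φ (fun a c => maxEnt ι (i, a) (j, c)) b b' = _
  rw [maxEnt_block, hΦ.map_smul, Matrix.smul_apply, smul_eq_mul]

lemma idTensor_outer {R : Type} [Fintype R] [Nonempty ι]
    (Φ : Matrix ι ι ℂ → Matrix κ κ ℂ) (hΦ : IsLinearMap ℂ Φ) (w : R × ι → ℂ) :
    idTensor Φ (outerV w)
      = ((Fintype.card ι : ℂ)) • (Cw (κ := κ) w * idTensor Φ (maxEnt ι) * (Cw (κ := κ) w)ᴴ) := by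
  ext p q
  have hd : (Fintype.card ι : ℂ) ≠ 0 := by
    exact_mod_cast Nat.cast_ne_zero.mpr Fintype.card_ne_zero
  have key : idTensor Φ (outerV w) p q
      = ∑ i, ∑ j, (w (p.1, i) * star (w (q.1, j))) *
          Φ (Matrix.single i j 1) p.2 q.2 :=
    apply_entry Φ hΦ _ p.2 q.2
  rw [key, Matrix.smul_apply, smul_eq_mul, Matrix.mul_apply]
  simp only [Matrix.mul_apply, Matrix.conjTranspose_apply, Cw, Fintype.sum_prod_type,
    ite_mul, zero_mul, mul_ite, mul_zero, Finset.sum_ite_eq, Finset.sum_ite_eq',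
    Finset.mem_univ, if_true, apply_ite (star : ℂ → ℂ), star_zero]
  simp only [idTensor_maxEnt_apply Φ hΦ]
  rw [Finset.sum_comm, Finset.mul_sum]
  refine Finset.sum_congr rfl fun j _ => ?_
  rw [Finset.sum_mul, Finset.mul_sum]
  refine Finset.sum_congr rfl fun i _ => ?_
  field_simp

lemma idTensor_add {R : Type} (Φ : Matrix ι ι ℂ → Matrix κ κ ℂ) (hΦ : IsLinearMap ℂ Φ)
    (X Y : Matrix (R × ι) (R × ι) ℂ) :
    idTensor Φ (X + Y) = idTensor Φ X + idTensor Φ Y := by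
  ext p q
  have hXY : (fun a b => (X + Y) (p.1, a) (q.1, b))
      = ((fun a b => X (p.1, a) (q.1, b)) : Matrix ι ι ℂ)
        + ((fun a b => Y (p.1, a) (q.1, b)) : Matrix ι ι ℂ) := by
    funext a b
    simp [Matrix.add_apply]
  show Φ _ p.2 q.2 = _
  have h2 := congrFun (congrFun (hΦ.map_add ((fun a b => X (p.1, a) (q.1, b)) : Matrix ι ι ℂ)
    ((fun a b => Y (p.1, a) (q.1, b)) : Matrix ι ι ℂ)) p.2) q.2
  rw [hXY]
  exact h2

lemma key_psd {R : Type} [Fintype R] [Nonempty ι]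
    (N M : Matrix ι ι ℂ → Matrix κ κ ℂ) (hN : IsChannel N) (hM : IsChannel M) (l : ℝ)
    (h : (((2 : ℝ) ^ l) • idTensor M (maxEnt ι) - idTensor N (maxEnt ι)).PosSemidef)
    {ρ : Matrix (R × ι) (R × ι) ℂ} (hρ : ρ.PosSemidef) :
    (((2 : ℝ) ^ l) • idTensor M ρ - idTensor N ρ).PosSemidef := by
  classical
  open scoped MatrixOrder in
  set B := CFC.sqrt ρ with hBdef
  open scoped MatrixOrder in
  have hB : B * B = ρ := CFC.sqrt_mul_sqrt_self ρ hρ.nonneg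
  open scoped MatrixOrder in
  have hBh : B.IsHermitian := (Matrix.nonneg_iff_posSemidef.mp (CFC.sqrt_nonneg ρ)).1
  have hρsum : ρ = ∑ k : R × ι, outerV (fun p => B p k) := by
    rw [← hB]
    ext p q
    rw [Matrix.mul_apply, Matrix.sum_apply]
    refine Finset.sum_congr rfl fun k _ => ?_
    show B p k * B k q = B p k * star (B q k)
    rw [hBh.apply]
  set S : Matrix (R × ι) (R × ι) ℂ → Matrix (R × κ) (R × κ) ℂ :=
    fun X => ((2 : ℝ) ^ l) • idTensor M X - idTensor N X with hS
  have hSadd : ∀ X Y, S (X + Y) = S X + S Y := by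
    intro X Y
    simp only [hS, idTensor_add M hM.linear, idTensor_add N hN.linear, smul_add]
    abel
  have hmap : S ρ = ∑ k : R × ι, S (outerV (fun p => B p k)) := by
    conv_lhs => rw [hρsum]
    exact map_sum (AddMonoidHom.mk' S hSadd) _ _
  show (S ρ).PosSemidef
  rw [hmap]
  refine psd_sum _ _ fun k _ => ?_
  -- rewrite each summand as a conjugation
  set w : R × ι → ℂ := fun p => B p k
  have hrw : S (outerV w)
      = ((Fintype.card ι : ℂ)) •
          (Cw (κ := κ) w * (((2 : ℝ) ^ l) • idTensor M (maxEnt ι) - idTensor N (maxEnt ι)) * (Cw (κ := κ) w)ᴴ) := by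
    simp only [hS, idTensor_outer M hM.linear w, idTensor_outer N hN.linear w,
      realSmul_matrix, Matrix.mul_sub, Matrix.sub_mul, Matrix.mul_smul, Matrix.smul_mul,
      smul_sub]
    rw [smul_comm]
  rw [hrw]
  have hconj := h.mul_mul_conjTranspose_same (Cw w : Matrix (R × κ) (ι × κ) ℂ)
  have := psd_complex_smul hconj (c := (Fintype.card ι : ℝ)) (Nat.cast_nonneg _)
  simpa using this

lemma Dmax_le_of_imp {n m : Type} [Fintype n] [Fintype m] {ρ σ : Matrix n n ℂ}
    {ρ' σ' : Matrix m m ℂ}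
    (h : ∀ l : ℝ, (((2 : ℝ) ^ l) • σ - ρ).PosSemidef → (((2 : ℝ) ^ l) • σ' - ρ').PosSemidef) :
    Dmax ρ' σ' ≤ Dmax ρ σ :=
  le_iInf₂ fun l hl => iInf₂_le l (h l hl)

lemma Dmax_submatrix {n m : Type} [Fintype n] [Fintype m] (g : m ≃ n) (X Y : Matrix n n ℂ) :
    Dmax (X.submatrix g g) (Y.submatrix g g) = Dmax X Y := by
  have hsub : ∀ l : ℝ, (((2 : ℝ) ^ l) • Y - X).submatrix g g
      = ((2 : ℝ) ^ l) • Y.submatrix g g - X.submatrix g g := by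
    intro l
    ext p q
    simp [Matrix.submatrix_apply, Matrix.sub_apply, Matrix.smul_apply]
  apply le_antisymm
  · exact Dmax_le_of_imp fun l hl => hsub l ▸ hl.submatrix g
  · exact Dmax_le_of_imp fun l hl =>
      (Matrix.posSemidef_submatrix_equiv g).mp (by rw [hsub]; exact hl)

lemma maxEnt_posSemidef [Nonempty ι] : (maxEnt ι).PosSemidef := by
  refine Matrix.PosSemidef.of_dotProduct_mulVec_nonneg ?_ ?_
  · ext p q
    by_cases h1 : p.1 = p.2 <;> by_cases h2 : q.1 = q.2 <;>
      simp [maxEnt, Matrix.conjTranspose_apply, h1, h2, Complex.star_def, map_inv₀,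
        Complex.conj_natCast]
  · intro x
    have hq : dotProduct (star x) ((maxEnt ι) *ᵥ x)
        = (((Fintype.card ι : ℝ))⁻¹ * Complex.normSq (∑ i, x (i, i)) : ℝ) := by
      simp only [dotProduct, Matrix.mulVec, maxEnt, Fintype.sum_prod_type,
        Pi.star_apply, ite_mul, zero_mul, mul_ite, mul_zero]
      simp only [ite_and, Finset.sum_ite_irrel, Finset.sum_ite_eq, Finset.mem_univ, if_true,
        mul_ite, mul_zero, Finset.sum_const_zero]
      rw [← Finset.sum_mul, ← Finset.mul_sum, ← star_sum, Complex.ofReal_mul,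
        Complex.normSq_eq_conj_mul_self]
      push_cast
      rw [starRingEnd_apply]
      ring
    rw [hq]
    exact Complex.zero_le_real.mpr (mul_nonneg (by positivity) (Complex.normSq_nonneg _))

end MyAux

/-- The max-relative entropy channel divergence is achieved by the maximally
entangled state. -/
theorem channelDiv_Dmax_eq_maxEnt
    {ι κ : Type} [Fintype ι] [DecidableEq ι] [Nonempty ι] [Fintype κ] [DecidableEq κ]
    (N M : Matrix ι ι ℂ → Matrix κ κ ℂ) (hN : IsChannel N) (hM : IsChannel M) :
    channelDiv DmaxFam N M = Dmax (idTensor N (maxEnt ι)) (idTensor M (maxEnt ι)) := by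
  apply le_antisymm
  · refine iSup_le fun R => iSup_le fun ρ => iSup_le fun hρ => ?_
    exact Dmax_le_of_imp fun l hl => key_psd N M hN hM l hl hρ.1
  · set d := Fintype.card ι with hd
    have hdpos : 0 < d := Fintype.card_pos
    set e : Fin d ≃ ι := (Fintype.equivFin ι).symm with he
    set f : Fin d × ι → ι × ι := fun p => (e p.1, p.2) with hf
    set g : (Fin d × κ) ≃ (ι × κ) := e.prodCongr (Equiv.refl κ) with hg
    set ρ' : Matrix (Fin d × ι) (Fin d × ι) ℂ := (maxEnt ι).submatrix f f with hρ'def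
    have hcommN : idTensor N ρ' = (idTensor N (maxEnt ι)).submatrix g g := rfl
    have hcommM : idTensor M ρ' = (idTensor M (maxEnt ι)).submatrix g g := rfl
    have hd0 : (d : ℂ) ≠ 0 := Nat.cast_ne_zero.mpr hdpos.ne'
    have htr : ρ'.trace = 1 := by
      simp only [Matrix.trace, Matrix.diag, hρ'def, Matrix.submatrix_apply, hf, maxEnt,
        Fintype.sum_prod_type, and_self, Finset.sum_ite_eq, Finset.mem_univ, if_true,
        Finset.sum_const, Finset.card_univ, Fintype.card_fin, nsmul_eq_mul]
      rw [← hd]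
      field_simp
    have hρ' : IsDensity ρ' := ⟨maxEnt_posSemidef.submatrix f, htr⟩
    have hval : DmaxFam (Fin d × κ) (idTensor N ρ') (idTensor M ρ')
        = Dmax (idTensor N (maxEnt ι)) (idTensor M (maxEnt ι)) := by
      show Dmax _ _ = _
      rw [hcommN, hcommM]
      exact Dmax_submatrix g _ _
    exact le_iSup_of_le d (le_iSup_of_le ρ' (le_iSup_of_le hρ' (le_of_eq hval.symm)))


end
end

section
/- Meta-converse for channel discrimination: let N, M : A → B be quantum channels, let n ∈ ℕ, and consider any n-round adaptive channel discrimination protocol with final decision probabilities p (when the channel is N) and q (when the channel is M). Then for any faithful generalized divergence D (i.e., D(ρ‖ρ) ≤ 0 for all states ρ), the binary divergence satisfies D(p‖q) ≤ n · D^A(N‖M), where D(p‖q) := D(diag(p, 1−p) ‖ diag(q, 1−q)). -/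
open scoped BigOperators ComplexOrder

noncomputable section

attribute [local instance] Classical.propDecidable

section MetaConverseHelpers

open Matrix

lemma psd_trace_nonneg {ι : Type} [Fintype ι] {A : Matrix ι ι ℂ} (hA : A.PosSemidef) :
    0 ≤ A.trace := by
  classical
  refine Finset.sum_nonneg fun i _ => ?_
  exact hA.diag_nonneg

open scoped MatrixOrder in
lemma psd_trace_mul_nonneg {ι : Type} [Fintype ι] [DecidableEq ι] {A B : Matrix ι ι ℂ}
    (hA : A.PosSemidef) (hB : B.PosSemidef) : 0 ≤ (A * B).trace := by
  have h2 : (A * B).trace = (CFC.sqrt A * B * (CFC.sqrt A).conjTranspose).trace := by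
    rw [(CFC.sqrt_nonneg A).posSemidef.isHermitian.eq, Matrix.trace_mul_cycle,
      CFC.sqrt_mul_sqrt_self A hA.nonneg]
  rw [h2]
  exact psd_trace_nonneg (hB.mul_mul_conjTranspose_same _)

lemma trace_mul_real {ι : Type} [Fintype ι] {Q ρ : Matrix ι ι ℂ}
    (hQ : Q.IsHermitian) (hρ : ρ.IsHermitian) :
    ((Q * ρ).trace.re : ℂ) = (Q * ρ).trace := by
  have : (starRingEnd ℂ) (Q * ρ).trace = (Q * ρ).trace :=
    calc (starRingEnd ℂ) (Q * ρ).trace = ((Q * ρ).conjTranspose).trace :=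
          (Matrix.trace_conjTranspose _).symm
    _ = (ρ.conjTranspose * Q.conjTranspose).trace := by rw [Matrix.conjTranspose_mul]
    _ = (ρ * Q).trace := by rw [hQ.eq, hρ.eq]
    _ = (Q * ρ).trace := Matrix.trace_mul_comm _ _
  exact Complex.conj_eq_iff_re.mp this

lemma ereal_sub_le {x y A : EReal} (hA : A ≠ ⊤) (hy : y ≠ ⊤) (h : x - y ≤ A) : x ≤ y + A := by
  induction y using EReal.rec with
  | top => exact absurd rfl hy
  | bot =>
    rcases eq_or_ne x ⊥ with hx | hx
    · simp [hx]
    · exfalso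
      apply hA
      have : x - ⊥ = ⊤ := by
        rw [sub_eq_add_neg]
        simpa using EReal.add_top_iff_ne_bot.mpr hx
      exact top_le_iff.mp (this ▸ h)
  | coe r =>
    induction x using EReal.rec with
    | bot => exact bot_le
    | top => exact absurd (top_le_iff.mp ((EReal.top_sub_coe r) ▸ h)) hA
    | coe s =>
      induction A using EReal.rec with
      | bot => exfalso; rw [← EReal.coe_sub] at h; exact (EReal.coe_ne_bot _) (le_bot_iff.mp h)
      | top => exact absurd rfl hA
      | coe a =>
        rw [← EReal.coe_sub] at h
        rw [← EReal.coe_add]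
        exact_mod_cast by linarith [EReal.coe_le_coe_iff.mp h]

lemma ereal_natmul_ne_top {A : EReal} (hA : A ≠ ⊤) (k : ℕ) : ((k : ℕ) : EReal) * A ≠ ⊤ := by
  induction A using EReal.rec with
  | top => exact absurd rfl hA
  | bot =>
    rcases Nat.eq_zero_or_pos k with hk | hk
    · simp [hk]
    · rw [← EReal.coe_coe_eq_natCast, EReal.mul_bot_of_pos (by exact_mod_cast hk)]
      exact bot_ne_top
  | coe a =>
    rw [← EReal.coe_coe_eq_natCast, ← EReal.coe_mul]
    exact EReal.coe_ne_top _

lemma ereal_natmul_step {A : EReal} (hA : A ≠ ⊤) (k : ℕ) :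
    ((k + 1 : ℕ) : EReal) * A + A = ((k + 2 : ℕ) : EReal) * A := by
  induction A using EReal.rec with
  | top => exact absurd rfl hA
  | bot =>
    rw [← EReal.coe_coe_eq_natCast, ← EReal.coe_coe_eq_natCast,
      EReal.mul_bot_of_pos (by exact_mod_cast Nat.succ_pos k),
      EReal.mul_bot_of_pos (by exact_mod_cast Nat.succ_pos (k+1))]
    simp
  | coe a =>
    rw [← EReal.coe_coe_eq_natCast, ← EReal.coe_coe_eq_natCast, ← EReal.coe_mul, ← EReal.coe_mul,
      ← EReal.coe_add]
    norm_cast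
    push_cast
    ring

lemma idTensor_trace {R ι κ : Type} [Fintype R] [Fintype ι] [Fintype κ]
    (Φ : Matrix ι ι ℂ → Matrix κ κ ℂ) (h : ∀ X, (Φ X).trace = X.trace)
    (X : Matrix (R × ι) (R × ι) ℂ) : (idTensor Φ X).trace = X.trace := by
  calc (idTensor Φ X).trace
      = ∑ r : R, (Φ (Matrix.of fun a b => X (r, a) (r, b))).trace := by
        simp only [Matrix.trace, Matrix.diag, idTensor, Fintype.sum_prod_type, Matrix.of_apply]
        rfl
    _ = ∑ r : R, (Matrix.of fun a b => X (r, a) (r, b)).trace := by simp only [h]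
    _ = X.trace := by
        simp [Matrix.trace, Matrix.diag, Fintype.sum_prod_type, Matrix.of_apply]

lemma channel_psd {ι κ : Type} [Fintype ι] [Fintype κ]
    {Φ : Matrix ι ι ℂ → Matrix κ κ ℂ} (hΦ : IsChannel Φ)
    {X : Matrix ι ι ℂ} (hX : X.PosSemidef) : (Φ X).PosSemidef := by
  have h1 : (X.submatrix (Prod.snd : Fin 1 × ι → ι) Prod.snd).PosSemidef := hX.submatrix _
  have h2 := hΦ.compPos 1 _ h1
  exact h2.submatrix (fun a : κ => ((0 : Fin 1), a))

lemma channel_density {ι κ : Type} [Fintype ι] [Fintype κ]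
    {Φ : Matrix ι ι ℂ → Matrix κ κ ℂ} (hΦ : IsChannel Φ)
    {X : Matrix ι ι ℂ} (hX : IsDensity X) : IsDensity (Φ X) :=
  ⟨channel_psd hΦ hX.1, by rw [hΦ.tracePres]; exact hX.2⟩

lemma idTensor_density {ι κ : Type} [Fintype ι] [Fintype κ] {k : ℕ}
    {Φ : Matrix ι ι ℂ → Matrix κ κ ℂ} (hΦ : IsChannel Φ)
    {X : Matrix (Fin k × ι) (Fin k × ι) ℂ} (hX : IsDensity X) :
    IsDensity (idTensor Φ X) :=
  ⟨hΦ.compPos k X hX.1, by rw [idTensor_trace Φ hΦ.tracePres]; exact hX.2⟩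

end MetaConverseHelpers
section Meas
open Matrix

def measE {ι : Type} [Fintype ι] [DecidableEq ι] (Q : Matrix ι ι ℂ) : Fin 2 → Matrix ι ι ℂ :=
  fun j => if j = 0 then Q else (1 : Matrix ι ι ℂ) - Q

def measCh {ι : Type} [Fintype ι] [DecidableEq ι] (Q : Matrix ι ι ℂ) :
    Matrix ι ι ℂ → Matrix (Fin 2) (Fin 2) ℂ :=
  fun X => Matrix.diagonal (fun j => (measE Q j * X).trace)

variable {ι : Type} [Fintype ι] [DecidableEq ι] {Q : Matrix ι ι ℂ}

lemma measCh_linear : IsLinearMap ℂ (measCh Q) := by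
  constructor
  · intro X Y
    ext i j
    by_cases h : i = j
    · subst h
      simp [measCh, Matrix.add_apply, Matrix.diagonal_apply_eq, mul_add, Matrix.trace_add]
    · simp [measCh, Matrix.add_apply, Matrix.diagonal_apply_ne _ h]
  · intro c X
    ext i j
    by_cases h : i = j
    · subst h
      simp [measCh, Matrix.smul_apply, Matrix.diagonal_apply_eq, Matrix.mul_smul,
        Matrix.trace_smul]
    · simp [measCh, Matrix.smul_apply, Matrix.diagonal_apply_ne _ h]

lemma measCh_trace (X : Matrix ι ι ℂ) : (measCh Q X).trace = X.trace := by
  simp only [measCh, Matrix.trace_diagonal, Fin.sum_univ_two, measE]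
  norm_num [Matrix.sub_mul, Matrix.one_mul, Matrix.trace_sub]

end Meas
open Matrix in
/-- The "compression" matrix used in the CP proof. -/
def cprM {k : ℕ} {ι : Type} [DecidableEq ι] (w : Fin k → ℂ) : Matrix (Fin k × ι) ι ℂ :=
  Matrix.of fun p b => if p.2 = b then w p.1 else 0

open Matrix in
lemma cprM_conj_mul {k : ℕ} {ι : Type} [Fintype ι] [DecidableEq ι]
    (w : Fin k → ℂ) (X : Matrix (Fin k × ι) (Fin k × ι) ℂ) :
    (cprM (ι := ι) w)ᴴ * X * (cprM (ι := ι) w) =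
      ∑ r : Fin k, ∑ s : Fin k, (star (w r) * w s) •
        (Matrix.of fun a b => X (r, a) (s, b)) := by
  ext a b
  simp only [Matrix.mul_apply, Matrix.conjTranspose_apply, cprM, Matrix.of_apply,
    Matrix.sum_apply, Matrix.smul_apply, smul_eq_mul, Fintype.sum_prod_type]
  simp only [apply_ite star, star_zero, ite_mul, zero_mul, mul_ite, mul_zero,
    Finset.sum_ite_eq', Finset.sum_ite_eq, Finset.mem_univ, if_true]
  rw [Finset.sum_comm]
  simp only [Finset.sum_mul]
  exact Finset.sum_congr rfl fun s _ => Finset.sum_congr rfl fun r _ => by ring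

open Matrix in
lemma quad_trace {k : ℕ} {ι : Type} [Fintype ι] [DecidableEq ι]
    (E : Matrix ι ι ℂ) (X : Matrix (Fin k × ι) (Fin k × ι) ℂ) (w : Fin k → ℂ) :
    (E * ((cprM (ι := ι) w)ᴴ * X * cprM (ι := ι) w)).trace
      = ∑ r : Fin k, ∑ s : Fin k, star (w r) * w s *
          (E * Matrix.of fun a b => X (r, a) (s, b)).trace := by
  rw [cprM_conj_mul]
  simp only [Matrix.mul_sum, Matrix.mul_smul, Matrix.trace_sum, Matrix.trace_smul, smul_eq_mul]

open Matrix in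
lemma measCh_isChannel {ι : Type} [Fintype ι] [DecidableEq ι] {Q : Matrix ι ι ℂ}
    (hQ : Q.PosSemidef) (h1 : ((1 : Matrix ι ι ℂ) - Q).PosSemidef) :
    IsChannel (measCh Q) := by
  refine ⟨measCh_linear, measCh_trace, ?_⟩
  intro k X hX
  have hE : ∀ j : Fin 2, (measE Q j).PosSemidef := fun j => by
    unfold measE; split_ifs; exacts [hQ, h1]
  have key : ∀ p q : Fin k × Fin 2, idTensor (measCh Q) X p q =
      if p.2 = q.2 then (measE Q p.2 * Matrix.of fun a b => X (p.1, a) (q.1, b)).trace else 0 :=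
    fun p q => rfl
  have hblk : ∀ r s : Fin k, (Matrix.of fun a b => X (s, a) (r, b))ᴴ
      = Matrix.of fun a b => X (r, a) (s, b) := by
    intro r s; ext a b
    simpa [Matrix.conjTranspose_apply] using hX.1.apply (r, a) (s, b)
  refine Matrix.PosSemidef.of_dotProduct_mulVec_nonneg ?_ ?_
  · ext p q
    rw [Matrix.conjTranspose_apply, key, key]
    by_cases h : p.2 = q.2
    · rw [if_pos h, if_pos h.symm, ← h]
      rw [← Matrix.trace_conjTranspose, Matrix.conjTranspose_mul, hblk, (hE _).1.eq]
      exact Matrix.trace_mul_comm _ _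
    · rw [if_neg (fun hh => h hh.symm), if_neg h, star_zero]
  · intro v
    have expand : dotProduct (star v) ((idTensor (measCh Q) X).mulVec v)
        = ∑ j : Fin 2, ∑ r : Fin k, ∑ s : Fin k, star (v (r, j)) * v (s, j) *
            (measE Q j * Matrix.of fun a b => X (r, a) (s, b)).trace := by
      simp only [dotProduct, Matrix.mulVec, key, Fintype.sum_prod_type, ite_mul, zero_mul,
        Finset.sum_ite_eq, Finset.mem_univ, if_true, Finset.mul_sum, Pi.star_apply]
      rw [Finset.sum_comm]
      exact Finset.sum_congr rfl fun j _ => Finset.sum_congr rfl fun r _ =>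
        Finset.sum_congr rfl fun s _ => by ring
    rw [expand]
    refine Finset.sum_nonneg fun j _ => ?_
    rw [← quad_trace (measE Q j) X (fun r => v (r, j))]
    exact psd_trace_mul_nonneg (hE j) (hX.conjTranspose_mul_mul_same _)
open Matrix in
lemma measCh_eq_binState {ι : Type} [Fintype ι] [DecidableEq ι] {Q ρ : Matrix ι ι ℂ}
    (hQ : Q.IsHermitian) (hρ : ρ.PosSemidef) (hτ : ρ.trace = 1) :
    measCh Q ρ = binState ((Q * ρ).trace.re) := by
  have hfun : (fun j : Fin 2 => (measE Q j * ρ).trace)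
      = (fun i : Fin 2 => if i = 0 then ((Q * ρ).trace.re : ℂ)
          else ((1 - (Q * ρ).trace.re : ℝ) : ℂ)) := by
    funext j
    by_cases h : j = 0
    · subst h
      simp only [measE, if_pos rfl]
      exact (trace_mul_real hQ hρ.1).symm
    · simp only [measE, if_neg h]
      rw [Matrix.sub_mul, Matrix.one_mul, Matrix.trace_sub, hτ]
      push_cast
      rw [trace_mul_real hQ hρ.1]
  unfold measCh binState
  rw [hfun]

/-- Meta-converse for channel discrimination: for an `n = m + 1`-round
adaptive protocol with final decision probabilities `p`, `q`, and any faithful generalized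
divergence, `D(p‖q) ≤ n · D^𝒜(N‖M)`. -/
theorem meta_converse
    (D : DivFam) (hdp : DivDataProcessing D) (hfaith : DivFaithful D)
    {ι κ : Type} [Fintype ι] [DecidableEq ι] [Fintype κ] [DecidableEq κ]
    (N M : Matrix ι ι ℂ → Matrix κ κ ℂ) (hN : IsChannel N) (hM : IsChannel M)
    (m : ℕ) (P : Protocol ι κ m) :
    D (Fin 2) (binState (P.acceptProb N)) (binState (P.acceptProb M)) ≤
      ((m + 1 : ℕ) : EReal) * amortizedDiv D N M := by
  set A := amortizedDiv D N M with hAdef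
  rcases eq_or_ne A ⊤ with hA | hA
  · have hpos : (0 : EReal) < ((m + 1 : ℕ) : EReal) := by
      rw [← EReal.coe_coe_eq_natCast]
      exact_mod_cast Nat.cast_pos.mpr (Nat.succ_pos m)
    rw [hA, EReal.mul_top_of_pos hpos]
    exact le_top
  · have hdens : ∀ (Ch : Matrix ι ι ℂ → Matrix κ κ ℂ), IsChannel Ch →
        ∀ i, i ≤ m → IsDensity (P.evolve Ch i) := by
      intro Ch hCh i
      induction i with
      | zero => intro _; exact P.init_density
      | succ i ih =>
        intro hi
        exact channel_density (P.adapt_channel i (Nat.lt_of_succ_le hi))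
          (idTensor_density hCh (ih (Nat.le_of_succ_le hi)))
    have hbound : ∀ i, i ≤ m →
        D (Fin (P.r i) × κ) (idTensor N (P.evolve N i)) (idTensor M (P.evolve M i))
          - D (Fin (P.r i) × ι) (P.evolve N i) (P.evolve M i) ≤ A := by
      intro i hi
      exact le_iSup_of_le (P.r i) (le_iSup_of_le (P.evolve N i) (le_iSup_of_le (P.evolve M i)
        (le_iSup_of_le (hdens N hN i hi) (le_iSup_of_le (hdens M hM i hi) le_rfl))))
    have key : ∀ i, i ≤ m →
        D (Fin (P.r i) × κ) (idTensor N (P.evolve N i)) (idTensor M (P.evolve M i))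
          ≤ ((i + 1 : ℕ) : EReal) * A := by
      intro i
      induction i with
      | zero =>
        intro _
        have h0 : D (Fin (P.r 0) × ι) (P.evolve N 0) (P.evolve M 0) ≤ 0 :=
          hfaith _ P.init P.init_density
        have hne : D (Fin (P.r 0) × ι) (P.evolve N 0) (P.evolve M 0) ≠ ⊤ := by
          intro h
          rw [h] at h0
          exact absurd h0 (by simp)
        calc D (Fin (P.r 0) × κ) (idTensor N (P.evolve N 0)) (idTensor M (P.evolve M 0))
            ≤ D (Fin (P.r 0) × ι) (P.evolve N 0) (P.evolve M 0) + A :=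
              ereal_sub_le hA hne (hbound 0 (Nat.zero_le m))
          _ ≤ 0 + A := add_le_add_left h0 A
          _ = ((0 + 1 : ℕ) : EReal) * A := by simp
      | succ i ih =>
        intro hi
        have him : i ≤ m := Nat.le_of_succ_le hi
        have h1 := ih him
        have hstep : D (Fin (P.r (i+1)) × ι) (P.evolve N (i+1)) (P.evolve M (i+1))
            ≤ D (Fin (P.r i) × κ) (idTensor N (P.evolve N i)) (idTensor M (P.evolve M i)) :=
          hdp _ _ (P.adapt i) (P.adapt_channel i (Nat.lt_of_succ_le hi)) _ _
            (idTensor_density hN (hdens N hN i him)) (idTensor_density hM (hdens M hM i him))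
        have h2 : D (Fin (P.r (i+1)) × ι) (P.evolve N (i+1)) (P.evolve M (i+1))
            ≤ ((i + 1 : ℕ) : EReal) * A := hstep.trans h1
        have hne : D (Fin (P.r (i+1)) × ι) (P.evolve N (i+1)) (P.evolve M (i+1)) ≠ ⊤ :=
          fun h => (ereal_natmul_ne_top hA (i+1)) (top_le_iff.mp (h ▸ h2))
        calc D (Fin (P.r (i+1)) × κ) (idTensor N (P.evolve N (i+1))) (idTensor M (P.evolve M (i+1)))
            ≤ D (Fin (P.r (i+1)) × ι) (P.evolve N (i+1)) (P.evolve M (i+1)) + A :=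
              ereal_sub_le hA hne (hbound (i+1) hi)
          _ ≤ ((i + 1 : ℕ) : EReal) * A + A := add_le_add_left h2 A
          _ = ((i + 1 + 1 : ℕ) : EReal) * A := ereal_natmul_step hA i
    have hfinN : IsDensity (P.final N) := idTensor_density hN (hdens N hN m le_rfl)
    have hfinM : IsDensity (P.final M) := idTensor_density hM (hdens M hM m le_rfl)
    have hmeas := hdp _ _ (measCh P.meas) (measCh_isChannel P.meas_psd P.meas_le_one) _ _
      hfinN hfinM
    rw [measCh_eq_binState P.meas_psd.1 hfinN.1 hfinN.2,
      measCh_eq_binState P.meas_psd.1 hfinM.1 hfinM.2] at hmeas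
    exact hmeas.trans (key m le_rfl)

end
end

section
/- Strong converse bound in the Stein setting: let N, M : A → B be quantum channels, n ∈ ℕ, and ε ∈ [0,1). For any n-round adaptive channel discrimination protocol whose type I error probability satisfies α_n ≤ ε, the type II error probability satisfies −(1/n) log₂ β_n ≤ D_max(N‖M) + (1/n) log₂(1/(1−ε)), where D_max(N‖M) is the max-relative entropy channel divergence. -/
open scoped BigOperators ComplexOrder

noncomputable section

attribute [local instance] Classical.propDecidable

namespace SteinAux
open Matrix
open scoped ComplexOrder

lemma cmul_nonneg {a b : ℂ} (ha : 0 ≤ a) (hb : 0 ≤ b) : 0 ≤ a * b := by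
  rw [Complex.nonneg_iff] at ha hb ⊢
  refine ⟨?_, ?_⟩
  · rw [Complex.mul_re, ← ha.2, ← hb.2]
    simpa using mul_nonneg ha.1 hb.1
  · rw [Complex.mul_im, ← ha.2, ← hb.2]
    ring

lemma real_smul_eq {n m : Type} (r : ℝ) (X : Matrix n m ℂ) : r • X = (r : ℂ) • X := by
  funext i j
  simp [Matrix.smul_apply, Complex.real_smul]

lemma psd_smul {n : Type} [Fintype n] {A : Matrix n n ℂ} (hA : A.PosSemidef)
    {r : ℝ} (hr : 0 ≤ r) : (r • A).PosSemidef := by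
  constructor
  · funext i j
    simp only [Matrix.conjTranspose_apply, Matrix.smul_apply, star_smul, star_trivial]
    rw [← Matrix.conjTranspose_apply, hA.1]
  · intro x
    exact (hA.smul hr).2 x

lemma psd_add {n : Type} [Fintype n] {A B : Matrix n n ℂ}
    (hA : A.PosSemidef) (hB : B.PosSemidef) : (A + B).PosSemidef := by
  constructor
  · funext i j
    simp only [Matrix.conjTranspose_apply, Matrix.add_apply, star_add]
    rw [← Matrix.conjTranspose_apply, hA.1, ← Matrix.conjTranspose_apply, hB.1]
  · intro x
    exact (hA.add hB).2 x

lemma psd_trace_re_nonneg {n : Type} [Fintype n] [DecidableEq n] {A : Matrix n n ℂ}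
    (hA : A.PosSemidef) : 0 ≤ A.trace.re := by
  have h : ∀ i, 0 ≤ (A i i).re := by
    intro i
    exact (Complex.nonneg_iff.mp hA.diag_nonneg).1
  rw [Matrix.trace, Complex.re_sum]
  exact Finset.sum_nonneg fun i _ => h i

open scoped MatrixOrder in
lemma trace_mul_psd_re_nonneg {n : Type} [Fintype n] [DecidableEq n] {A B : Matrix n n ℂ}
    (hA : A.PosSemidef) (hB : B.PosSemidef) : 0 ≤ ((A * B).trace).re := by
  have hA0 : 0 ≤ A := Matrix.nonneg_iff_posSemidef.mpr hA
  have h1 : A * B = CFC.sqrt A * (CFC.sqrt A * B) := by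
    rw [← mul_assoc, CFC.sqrt_mul_sqrt_self A hA0]
  have h2 : (A * B).trace = (CFC.sqrt A * B * CFC.sqrt A).trace := by
    rw [h1, Matrix.trace_mul_comm, mul_assoc]
  have h3 : (CFC.sqrt A * B * CFC.sqrt A).PosSemidef := by
    have h := hB.mul_mul_conjTranspose_same (CFC.sqrt A)
    rwa [(Matrix.nonneg_iff_posSemidef.mp (CFC.sqrt_nonneg A)).1.eq] at h
  rw [h2]
  exact psd_trace_re_nonneg h3

lemma channel_psd {ι κ : Type} [Fintype ι] [Fintype κ]
    {Φ : Matrix ι ι ℂ → Matrix κ κ ℂ} (hΦ : IsChannel Φ)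
    {Y : Matrix ι ι ℂ} (hY : Y.PosSemidef) : (Φ Y).PosSemidef := by
  have h := hΦ.compPos 1 (Y.submatrix Prod.snd Prod.snd) (hY.submatrix _)
  have e : Φ Y = (idTensor Φ (Y.submatrix Prod.snd Prod.snd)).submatrix
      (fun a : κ => ((0 : Fin 1), a)) (fun a : κ => ((0 : Fin 1), a)) := rfl
  rw [e]
  exact h.submatrix _

lemma map_csmul_sub {a b : Type} {Φ : Matrix a a ℂ → Matrix b b ℂ}
    (hΦ : IsLinearMap ℂ Φ) (c : ℂ) (X Y : Matrix a a ℂ) :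
    Φ (c • X - Y) = c • Φ X - Φ Y := by
  rw [hΦ.map_sub, hΦ.map_smul]

lemma map_rsmul_sub {a b : Type} {Φ : Matrix a a ℂ → Matrix b b ℂ}
    (hΦ : IsLinearMap ℂ Φ) (c : ℝ) (X Y : Matrix a a ℂ) :
    Φ (c • X - Y) = c • Φ X - Φ Y := by
  rw [real_smul_eq, real_smul_eq c (Φ X), map_csmul_sub hΦ]

lemma idTensor_csmul_sub {R ι κ : Type} {Φ : Matrix ι ι ℂ → Matrix κ κ ℂ}
    (hΦ : IsLinearMap ℂ Φ) (c : ℂ) (X Y : Matrix (R × ι) (R × ι) ℂ) :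
    idTensor Φ (c • X - Y) = c • idTensor Φ X - idTensor Φ Y := by
  funext p q
  have hb : (fun a b => (c • X - Y) (p.1, a) (q.1, b) : Matrix ι ι ℂ)
      = c • (fun a b => X (p.1, a) (q.1, b) : Matrix ι ι ℂ)
        - (fun a b => Y (p.1, a) (q.1, b) : Matrix ι ι ℂ) := by
    funext a b
    simp [Matrix.sub_apply, Matrix.smul_apply]
  show Φ (fun a b => (c • X - Y) (p.1, a) (q.1, b)) p.2 q.2 = _
  have e := hΦ.map_sub (c • (fun a b => X (p.1, a) (q.1, b) : Matrix ι ι ℂ))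
    (fun a b => Y (p.1, a) (q.1, b) : Matrix ι ι ℂ)
  have e2 := hΦ.map_smul c (fun a b => X (p.1, a) (q.1, b) : Matrix ι ι ℂ)
  have e3 : Φ (fun a b => (c • X - Y) (p.1, a) (q.1, b))
      = c • Φ (fun a b => X (p.1, a) (q.1, b)) - Φ (fun a b => Y (p.1, a) (q.1, b)) :=
    (congrArg Φ hb).trans (e.trans (congrArg (· - Φ (fun a b => Y (p.1, a) (q.1, b))) e2))
  refine (congrFun (congrFun e3 p.2) q.2).trans ?_
  simp [idTensor, Matrix.sub_apply, Matrix.smul_apply]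

lemma idTensor_rsmul_sub {R ι κ : Type} {Φ : Matrix ι ι ℂ → Matrix κ κ ℂ}
    (hΦ : IsLinearMap ℂ Φ) (c : ℝ) (X Y : Matrix (R × ι) (R × ι) ℂ) :
    idTensor Φ (c • X - Y) = c • idTensor Φ X - idTensor Φ Y := by
  rw [real_smul_eq, real_smul_eq c (idTensor Φ X), idTensor_csmul_sub hΦ]

lemma idTensor_trace {R ι κ : Type} [Fintype R] [Fintype ι] [Fintype κ]
    {Φ : Matrix ι ι ℂ → Matrix κ κ ℂ} (hΦ : ∀ X, (Φ X).trace = X.trace)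
    (X : Matrix (R × ι) (R × ι) ℂ) : (idTensor Φ X).trace = X.trace := by
  calc (idTensor Φ X).trace
      = ∑ r : R, (Φ (fun a b => X (r, a) (r, b))).trace := by
        simp only [Matrix.trace, Matrix.diag, idTensor, Fintype.sum_prod_type]
    _ = X.trace := by
        rw [Finset.sum_congr rfl (fun r _ => hΦ (fun a b => X (r, a) (r, b)))]
        simp only [Matrix.trace, Matrix.diag, Fintype.sum_prod_type]

lemma channel_density {ι κ : Type} [Fintype ι] [Fintype κ]
    {Φ : Matrix ι ι ℂ → Matrix κ κ ℂ} (hΦ : IsChannel Φ)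
    {ρ : Matrix ι ι ℂ} (h : IsDensity ρ) : IsDensity (Φ ρ) :=
  ⟨channel_psd hΦ h.1, by rw [hΦ.tracePres]; exact h.2⟩

lemma idTensor_density {ι κ : Type} [Fintype ι] [Fintype κ]
    {Φ : Matrix ι ι ℂ → Matrix κ κ ℂ} (hΦ : IsChannel Φ) {R : ℕ}
    {ρ : Matrix (Fin R × ι) (Fin R × ι) ℂ} (h : IsDensity ρ) :
    IsDensity (idTensor Φ ρ) :=
  ⟨hΦ.compPos R ρ h.1, by rw [idTensor_trace hΦ.tracePres]; exact h.2⟩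

lemma ereal_le_add_of_forall {x y : EReal} {c : ℝ}
    (h : ∀ l : ℝ, x < (l : EReal) → y ≤ ((l + c : ℝ) : EReal)) :
    y ≤ x + (c : EReal) := by
  rw [← EReal.le_of_forall_lt_iff_le]
  intro z hz
  have hxz : x < ((z - c : ℝ) : EReal) := by
    rw [EReal.coe_sub]
    exact (EReal.lt_sub_iff_add_lt (Or.inl (EReal.coe_ne_bot c))
      (Or.inl (EReal.coe_ne_top c))).mpr hz
  have := h (z - c) hxz
  simpa using this

end SteinAux

/-- Strong converse bound in the Stein setting: for an `n = m + 1`-round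
adaptive protocol with type I error at most `ε`,
`−(1/n) log₂ β_n ≤ D_max(N‖M) + (1/n) log₂(1/(1−ε))`. -/
theorem stein_strong_converse_Dmax
    {ι κ : Type} [Fintype ι] [DecidableEq ι] [Fintype κ] [DecidableEq κ]
    (N M : Matrix ι ι ℂ → Matrix κ κ ℂ) (hN : IsChannel N) (hM : IsChannel M)
    (m : ℕ) (ε : ℝ) (hε0 : 0 ≤ ε) (hε1 : ε < 1)
    (P : Protocol ι κ m) (hα : P.typeI N ≤ ε) :
    (((m + 1 : ℝ))⁻¹ : EReal) * negLog2 (P.typeII M) ≤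
      channelDiv DmaxFam N M +
        (((((m + 1 : ℝ))⁻¹ * Real.logb 2 ((1 - ε)⁻¹)) : ℝ) : EReal) := by
  classical
  apply SteinAux.ereal_le_add_of_forall
  intro lam hlt
  set c : ℝ := (2 : ℝ) ^ lam with hc_def
  have hc : 0 < c := Real.rpow_pos_of_pos (by norm_num) _
  -- Key: for every density input, idTensor N ρ ≤ c • idTensor M ρ
  have key : ∀ (R : ℕ) (ρ : Matrix (Fin R × ι) (Fin R × ι) ℂ), IsDensity ρ →
      (c • idTensor M ρ - idTensor N ρ).PosSemidef := by
    intro R ρ hρ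
    have hle : Dmax (idTensor N ρ) (idTensor M ρ) ≤ channelDiv DmaxFam N M :=
      le_iSup_of_le R (le_iSup_of_le ρ (le_iSup_of_le hρ le_rfl))
    have hlt' : (⨅ (l : ℝ)
        (_ : (((2 : ℝ) ^ l) • (idTensor M ρ) - idTensor N ρ).PosSemidef), (l : EReal))
        < (lam : EReal) := lt_of_le_of_lt hle hlt
    rw [iInf_lt_iff] at hlt'
    obtain ⟨l, hl⟩ := hlt'
    rw [iInf_lt_iff] at hl
    obtain ⟨hcond, hllam⟩ := hl
    have hlle : l ≤ lam := by exact_mod_cast hllam.le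
    have h2l : (2 : ℝ) ^ l ≤ c := (Real.rpow_le_rpow_left_iff (by norm_num)).mpr hlle
    have hσ : (idTensor M ρ).PosSemidef := hM.compPos R ρ hρ.1
    have heq : c • idTensor M ρ - idTensor N ρ
        = (c - (2 : ℝ) ^ l) • idTensor M ρ
          + (((2 : ℝ) ^ l) • idTensor M ρ - idTensor N ρ) := by
      rw [sub_smul]; abel
    rw [heq]
    exact SteinAux.psd_add (SteinAux.psd_smul hσ (by linarith)) hcond
  -- One-step bound before the adaptive map
  have step : ∀ i : ℕ, IsDensity (P.evolve M i) →
      ((c ^ i) • P.evolve M i - P.evolve N i).PosSemidef →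
      ((c ^ (i + 1)) • idTensor M (P.evolve M i)
        - idTensor N (P.evolve N i)).PosSemidef := by
    intro i hdM hord
    have hkey := key (P.r i) (P.evolve M i) hdM
    have h2 : ((c ^ i) • idTensor N (P.evolve M i)
        - idTensor N (P.evolve N i)).PosSemidef := by
      rw [← SteinAux.idTensor_rsmul_sub hN.linear]
      exact hN.compPos (P.r i) _ hord
    have heq : (c ^ (i + 1)) • idTensor M (P.evolve M i) - idTensor N (P.evolve N i)
        = (c ^ i) • (c • idTensor M (P.evolve M i) - idTensor N (P.evolve M i))
          + ((c ^ i) • idTensor N (P.evolve M i) - idTensor N (P.evolve N i)) := by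
      rw [pow_succ, smul_sub, smul_smul]; abel
    rw [heq]
    exact SteinAux.psd_add (SteinAux.psd_smul hkey (pow_nonneg hc.le i)) h2
  -- Induction along the protocol
  have ind : ∀ i, i ≤ m → IsDensity (P.evolve N i) ∧ IsDensity (P.evolve M i) ∧
      ((c ^ i) • P.evolve M i - P.evolve N i).PosSemidef := by
    intro i
    induction i with
    | zero =>
      intro _
      refine ⟨P.init_density, P.init_density, ?_⟩
      show ((c ^ 0) • P.init - P.init).PosSemidef
      rw [pow_zero, one_smul, sub_self]
      exact Matrix.PosSemidef.zero
    | succ i ih =>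
      intro hi
      obtain ⟨hdN, hdM, hord⟩ := ih (Nat.le_of_succ_le hi)
      have him : i < m := hi
      have hch := P.adapt_channel i him
      refine ⟨SteinAux.channel_density hch (SteinAux.idTensor_density hN hdN),
              SteinAux.channel_density hch (SteinAux.idTensor_density hM hdM), ?_⟩
      show ((c ^ (i + 1)) • P.adapt i (idTensor M (P.evolve M i))
          - P.adapt i (idTensor N (P.evolve N i))).PosSemidef
      rw [← SteinAux.map_rsmul_sub hch.linear]
      exact SteinAux.channel_psd hch (step i hdM hord)
  obtain ⟨hdN, hdM, hordm⟩ := ind m le_rfl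
  have hfin : ((c ^ (m + 1)) • P.final M - P.final N).PosSemidef := step m hdM hordm
  -- Trace inequality
  have htr := SteinAux.trace_mul_psd_re_nonneg P.meas_psd hfin
  have hexp : (P.meas * ((c ^ (m + 1)) • P.final M - P.final N)) =
      (c ^ (m + 1)) • (P.meas * P.final M) - P.meas * P.final N := by
    rw [Matrix.mul_sub, Matrix.mul_smul]
  rw [hexp] at htr
  have htrace_split : ((c ^ (m + 1)) • (P.meas * P.final M) - P.meas * P.final N).trace
      = (c ^ (m + 1)) • (P.meas * P.final M).trace - (P.meas * P.final N).trace := by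
    rw [Matrix.trace_sub, Matrix.trace_smul]
  rw [htrace_split] at htr
  set t : ℝ := ((P.meas * P.final N).trace).re with ht_def
  set β : ℝ := P.typeII M with hβ_def
  have htr' : 0 ≤ (c ^ (m + 1)) * β - t := by
    have : ((c ^ (m + 1)) • (P.meas * P.final M).trace - (P.meas * P.final N).trace).re
        = (c ^ (m + 1)) * β - t := by
      rw [Complex.sub_re, Complex.real_smul, Complex.re_ofReal_mul]
      rfl
    rw [← this]
    simpa using htr
  have h_t : P.typeI N = 1 - t := by
    have h1 : (((1 : Matrix (Fin (P.r m) × κ) (Fin (P.r m) × κ) ℂ) - P.meas) * P.final N)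
        = P.final N - P.meas * P.final N := by
      rw [Matrix.sub_mul, Matrix.one_mul]
    have h2 : (P.final N).trace = 1 := (SteinAux.idTensor_density hN hdN).2
    show ((((1 : Matrix (Fin (P.r m) × κ) (Fin (P.r m) × κ) ℂ) - P.meas)
        * P.final N).trace).re = 1 - t
    rw [h1, Matrix.trace_sub, h2, Complex.sub_re, Complex.one_re]
  have ht1 : 1 - ε ≤ t := by
    rw [h_t] at hα; linarith
  have h1ε : (0 : ℝ) < 1 - ε := by linarith
  have hβpos : 0 < β := by
    by_contra h
    push_neg at h
    have hcp : (0 : ℝ) < c ^ (m + 1) := pow_pos hc _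
    nlinarith
  have hkey_real : 1 - ε ≤ c ^ (m + 1) * β := by linarith
  -- Real logarithm inequality
  have hl1 : Real.logb 2 (1 - ε) ≤ Real.logb 2 (c ^ (m + 1) * β) :=
    Real.logb_le_logb_of_le (by norm_num) h1ε hkey_real
  have hl2 : Real.logb 2 (c ^ (m + 1) * β)
      = ((m : ℝ) + 1) * lam + Real.logb 2 β := by
    rw [Real.logb_mul (by positivity) (ne_of_gt hβpos), Real.logb_pow,
      hc_def, Real.logb_rpow (by norm_num) (by norm_num)]
    push_cast
    ring
  have hl3 : Real.logb 2 (1 - ε)⁻¹ = - Real.logb 2 (1 - ε) := Real.logb_inv _ _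
  have hlog : -Real.logb 2 β ≤ ((m : ℝ) + 1) * lam + Real.logb 2 (1 - ε)⁻¹ := by
    rw [hl3]; linarith [hl1, hl2.symm.le, hl2.le]
  -- Conclude in EReal
  have hβns : ¬ β ≤ 0 := not_le.mpr hβpos
  rw [negLog2, if_neg hβns, ← EReal.coe_inv, ← EReal.coe_mul, EReal.coe_le_coe_iff]
  have hm1 : (0 : ℝ) < (m : ℝ) + 1 := by positivity
  have hmul := mul_le_mul_of_nonneg_left hlog (inv_nonneg.mpr hm1.le)
  have hid : ((m : ℝ) + 1)⁻¹ * (((m : ℝ) + 1) * lam + Real.logb 2 (1 - ε)⁻¹)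
      = lam + ((m : ℝ) + 1)⁻¹ * Real.logb 2 (1 - ε)⁻¹ := by
    field_simp
  calc ((m : ℝ) + 1)⁻¹ * (-Real.logb 2 β)
      ≤ ((m : ℝ) + 1)⁻¹ * (((m : ℝ) + 1) * lam + Real.logb 2 (1 - ε)⁻¹) := hmul
    _ = lam + ((m : ℝ) + 1)⁻¹ * Real.logb 2 (1 - ε)⁻¹ := hid

end
end
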